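/- arXiv:2007.00539 — 2 statements merged into one kernel-verified Lean document; each statement's English description precedes it below -/
import Mathlib

section
/- Fix d ≥ 2 and λ ∈ [0,1]. For every finite set E of nearest-neighbor edges of Z^d, the probability that all edges of E are simultaneously open, ℙ_{p,λ,d}(σ(e) = 1 for all e ∈ E), is non-increasing in the site parameter p: for 0 < p_1 < p_2 ≤ 1, ℙ_{p_1,λ,d}(σ(E) ≡ 1) ≥ ℙ_{p_2,λ,d}(σ(E) ≡ 1). -/
open MeasureTheory ENNReal

namespace AlignmentPercolation

/-- Sites of the lattice `ℤ^d`. -/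
abbrev Site (d : ℕ) := Fin d → ℤ

/-- A site configuration: `true` means occupied. -/
abbrev SiteCfg (d : ℕ) := Site d → Bool

/-- Labels (open/closed) attached to (potential) segments, indexed by their ordered
pair of endpoints. -/
abbrev PairLabels (d : ℕ) := Site d × Site d → Bool

/-- A configuration of the independent alignment percolation model: a site
configuration together with independent labels for the segments. -/
abbrev Cfg (d : ℕ) := SiteCfg d × PairLabels d

/-- Nearest-neighbour edges of `ℤ^d`, indexed by their lower endpoint and direction:
`(u, i)` is the edge from `u` to `u + e_i`. -/
abbrev EdgeIdx (d : ℕ) := Site d × Fin d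

/-- The point obtained from `u` by replacing its `i`-th coordinate with `a`. -/
def seg {d : ℕ} (u : Site d) (i : Fin d) (a : ℤ) : Site d := Function.update u i a

/-- The point `u + e_i`. -/
def up {d : ℕ} (u : Site d) (i : Fin d) : Site d := seg u i (u i + 1)

/-- The skewed doubling map underlying the construction of an i.i.d.
Bernoulli(p) sequence from a single uniform random variable on `[0,1)`. -/
noncomputable def bernShift (p : ℝ) (x : ℝ) : ℝ :=
  if x < p then x / p else (x - p) / (1 - p)

open scoped Classical in
noncomputable def bernDigit (p : ℝ) (x : ℝ) : Bool := if x < p then true else false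

/-- The sequence of skewed binary digits of `x`; under the uniform distribution on
`[0,1)` this is an i.i.d. Bernoulli(p) sequence. -/
noncomputable def bernDigits (p : ℝ) (x : ℝ) : ℕ → Bool :=
  fun n => bernDigit p ((bernShift p)^[n] x)

/-- The i.i.d. Bernoulli(p) product probability measure on `ι → Bool`, for a countable
index type `ι`: the law of the family of skewed binary digits (indexed through an
injection `ι ↪ ℕ`) of a uniform random variable on `[0,1)`. Each coordinate is `true`
with probability `p` (with the convention that `p` is clamped to `[0,1]`). -/
noncomputable def iidBool (ι : Type*) [Countable ι] (p : ℝ) : Measure (ι → Bool) :=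
  Measure.map (fun f (i : ι) => f ((Countable.exists_injective_nat ι).choose i))
    (Measure.map (bernDigits p) (volume.restrict (Set.Ico (0 : ℝ) 1)))

/-- The law `ℙ_{p,λ,d}` of the independent alignment percolation model: sites are
occupied independently with probability `p`, and independently every potential
segment carries an independent Bernoulli(λ) label. -/
noncomputable def alignMeasure (d : ℕ) (p lam : ℝ) : Measure (Cfg d) :=
  (iidBool (Site d) p).prod (iidBool (Site d × Site d) lam)

/-- `(v, w)` is a feasible pair of the site configuration `ω` (ordered so that the
coordinate where they differ increases): `v` and `w` differ in exactly one
coordinate, are both occupied, and no site strictly between them is occupied. -/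
def FeasiblePair {d : ℕ} (ω : SiteCfg d) (v w : Site d) : Prop :=
  ∃ i : Fin d, (∀ j, j ≠ i → v j = w j) ∧ v i < w i ∧
    ω v = true ∧ ω w = true ∧ ∀ c : ℤ, v i < c → c < w i → ω (seg v i c) = false

/-- The edge `e` lies on the axis-parallel segment with endpoints `v` and `w`. -/
def EdgeOnSeg {d : ℕ} (e : EdgeIdx d) (v w : Site d) : Prop :=
  ∃ a b : ℤ, a ≤ e.1 e.2 ∧ e.1 e.2 < b ∧ v = seg e.1 e.2 a ∧ w = seg e.1 e.2 b

/-- The edge `e` is open in the configuration `ξ`: it lies on the segment of a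
feasible pair whose label is open. -/
def EdgeOpen {d : ℕ} (ξ : Cfg d) (e : EdgeIdx d) : Prop :=
  ∃ v w : Site d, FeasiblePair ξ.1 v w ∧ EdgeOnSeg e v w ∧ ξ.2 (v, w) = true

/-- The induced edge configuration `σ ∈ {0,1}^{E^d}` (as a `Bool`). -/
noncomputable def edgeState {d : ℕ} (ξ : Cfg d) (e : EdgeIdx d) : Bool :=
  @decide (EdgeOpen ξ e) (Classical.propDecidable _)

/-- The graph on `ℤ^d` whose edges are the open edges of the configuration `ξ`. -/
def openGraph {d : ℕ} (ξ : Cfg d) : SimpleGraph (Site d) where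
  Adj u v := ∃ i, (v = up u i ∧ EdgeOpen ξ (u, i)) ∨ (u = up v i ∧ EdgeOpen ξ (v, i))
  symm := by constructor; rintro u v ⟨i, h | h⟩; exacts [⟨i, Or.inr h⟩, ⟨i, Or.inl h⟩]
  loopless := by
    constructor
    rintro u ⟨i, ⟨h, -⟩ | ⟨h, -⟩⟩ <;>
    · have := congrFun h i
      simp [up, seg] at this

/-- The site `v` lies in an infinite connected component of open edges. -/
def PercolatesFrom {d : ℕ} (ξ : Cfg d) (v : Site d) : Prop :=
  {w | (openGraph ξ).Reachable v w}.Infinite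

/-- The set `𝒪` of open edges percolates. -/
def Percolates {d : ℕ} (ξ : Cfg d) : Prop := ∃ v, PercolatesFrom ξ v

/-- `θ(p,λ,d)`: the probability that the origin lies in an infinite open cluster. -/
noncomputable def theta (d : ℕ) (p lam : ℝ) : ℝ≥0∞ :=
  alignMeasure d p lam {ξ | PercolatesFrom ξ 0}

/-- `ℙ_{p,λ,d}(𝒪 percolates)`. -/
noncomputable def percProb (d : ℕ) (p lam : ℝ) : ℝ≥0∞ :=
  alignMeasure d p lam {ξ | Percolates ξ}

/-- The critical segment parameter `λ_c(p,d) = sup {λ ≥ 0 : θ(p,λ,d) = 0}`. -/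
noncomputable def lambdaC (d : ℕ) (p : ℝ) : ℝ :=
  sSup {lam : ℝ | 0 ≤ lam ∧ theta d p lam = 0}

/-- A configuration of Bernoulli bond percolation on `ℤ^d`. -/
abbrev BondCfg (d : ℕ) := EdgeIdx d → Bool

/-- Independent Bernoulli(λ) bond percolation on `ℤ^d`. -/
noncomputable def bondMeasure (d : ℕ) (lam : ℝ) : Measure (BondCfg d) :=
  iidBool (EdgeIdx d) lam

/-- The graph of open bonds of a bond configuration. -/
def bondGraph {d : ℕ} (σ : BondCfg d) : SimpleGraph (Site d) where
  Adj u v := ∃ i, (v = up u i ∧ σ (u, i) = true) ∨ (u = up v i ∧ σ (v, i) = true)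
  symm := by constructor; rintro u v ⟨i, h | h⟩; exacts [⟨i, Or.inr h⟩, ⟨i, Or.inl h⟩]
  loopless := by
    constructor
    rintro u ⟨i, ⟨h, -⟩ | ⟨h, -⟩⟩ <;>
    · have := congrFun h i
      simp [up, seg] at this

/-- The percolation function of Bernoulli bond percolation on `ℤ^d`. -/
noncomputable def thetaBond (d : ℕ) (lam : ℝ) : ℝ≥0∞ :=
  bondMeasure d lam {σ | {w | (bondGraph σ).Reachable 0 w}.Infinite}

/-- The critical parameter `p_c^bond(d)` of Bernoulli bond percolation on `ℤ^d`. -/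
noncomputable def pcBond (d : ℕ) : ℝ :=
  sSup {lam : ℝ | 0 ≤ lam ∧ thetaBond d lam = 0}

/-- The (closed) sup-norm box `B(x,L)` in `ℤ^d`. -/
def box (d : ℕ) (x : Site d) (L : ℝ) : Set (Site d) :=
  {z | ∀ i, |((z i - x i : ℤ) : ℝ)| ≤ L}

/-- The sphere `∂B(x,L) = {z : ‖z - x‖_∞ = ⌊L⌋}` in `ℤ^d`. -/
def sphere (d : ℕ) (x : Site d) (L : ℝ) : Set (Site d) :=
  {z | (∀ i, |z i - x i| ≤ ⌊L⌋) ∧ ∃ i, |z i - x i| = ⌊L⌋}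

/-- The sup-norm distance `‖x - y‖_∞` on `ℤ^d` (as a natural number). -/
def supDist {d : ℕ} (x y : Site d) : ℕ :=
  Finset.univ.sup fun i => (x i - y i).natAbs

/-- The sequence of scales: `L 0 = 10^4` and `L (k+1) = (L k)^(3/2)`. -/
noncomputable def Lscale : ℕ → ℝ
  | 0 => 10 ^ 4
  | k + 1 => Lscale k ^ ((3 : ℝ) / 2)

/-- `α(p) = -log (1-p)`. -/
noncomputable def alphaP (p : ℝ) : ℝ := - Real.log (1 - p)

/-- The edge `e` has both endpoints in `B`. -/
def EdgeIn {d : ℕ} (B : Set (Site d)) (e : EdgeIdx d) : Prop :=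
  e.1 ∈ B ∧ up e.1 e.2 ∈ B

/-- The event `A` is supported on the edges of `B`: it is measurable with respect to
the σ-algebra generated by the states of the edges with both endpoints in `B`. -/
def SupportedOnEdges {d : ℕ} (B : Set (Site d)) (A : Set (Cfg d)) : Prop :=
  MeasurableSet[MeasurableSpace.comap
    (fun ξ (e : {e : EdgeIdx d // EdgeIn B e}) => edgeState ξ e.1) inferInstance] A

/-- `S` is a set of points of `T` whose `L`-boxes cover `T`. -/
def IsCover (d : ℕ) (T : Set (Site d)) (L : ℝ) (S : Finset (Site d)) : Prop :=
  ↑S ⊆ T ∧ T ⊆ ⋃ x ∈ S, box d x L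

/-- `S` is a cover of `T` by `L`-boxes centred in `T`, of minimal cardinality. -/
def IsMinCover (d : ℕ) (T : Set (Site d)) (L : ℝ) (S : Finset (Site d)) : Prop :=
  IsCover d T L S ∧ ∀ S' : Finset (Site d), IsCover d T L S' → S.card ≤ S'.card



section Auxiliary

open Set

noncomputable def W (p : ℝ) (b : Bool) : ℝ≥0∞ :=
  if b then ENNReal.ofReal p else ENNReal.ofReal (1 - p)

lemma measurable_bernShift (p : ℝ) : Measurable (bernShift p) := by
  unfold bernShift
  exact Measurable.ite (measurableSet_lt measurable_id measurable_const)
    (measurable_id.div_const p) ((measurable_id.sub measurable_const).div_const (1 - p))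

lemma measurable_bernDigit (p : ℝ) : Measurable (bernDigit p) := by
  classical
  unfold bernDigit
  exact Measurable.ite (measurableSet_lt measurable_id measurable_const)
    measurable_const measurable_const

lemma measurable_bernDigits (p : ℝ) : Measurable (bernDigits p) := by
  refine measurable_pi_lambda _ fun n => ?_
  exact (measurable_bernDigit p).comp ((measurable_bernShift p).iterate n)

lemma W_true_add_W_false {p : ℝ} (h0 : 0 ≤ p) (h1 : p ≤ 1) : W p true + W p false = 1 := by
  simp only [W, if_true, if_false, Bool.false_eq_true]
  rw [← ENNReal.ofReal_add h0 (by linarith), add_sub_cancel, ENNReal.ofReal_one]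

lemma oneStep {p : ℝ} (h0 : 0 ≤ p) (h1 : p ≤ 1) (b : Bool) {A : Set ℝ}
    (hA : MeasurableSet A) :
    volume (Ico (0:ℝ) 1 ∩ {x | bernDigit p x = b} ∩ bernShift p ⁻¹' A)
      = W p b * volume (A ∩ Ico (0:ℝ) 1) := by
  classical
  cases b
  · -- digit false
    rcases eq_or_lt_of_le h1 with h1' | hp1
    · -- p = 1 : empty set, weight 0
      have hset : Ico (0:ℝ) 1 ∩ {x | bernDigit p x = false} ∩ bernShift p ⁻¹' A = ∅ := by
        ext x
        simp only [Set.mem_inter_iff, Set.mem_Ico, Set.mem_setOf_eq, Set.mem_empty_iff_false,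
          iff_false, not_and, bernDigit]
        rintro ⟨⟨hx0, hx1⟩, hd⟩
        rw [if_pos (by linarith)] at hd
        simp at hd
      rw [hset]
      simp [W, ← h1']
    · -- p < 1
      have h1p : (0:ℝ) < 1 - p := by linarith
      have hset : Ico (0:ℝ) 1 ∩ {x | bernDigit p x = false} ∩ bernShift p ⁻¹' A
          = (fun x => -p + x) ⁻¹' ((fun y => (1 - p)⁻¹ * y) ⁻¹' (A ∩ Ico (0:ℝ) 1)) := by
        ext x
        have hrw : (1 - p)⁻¹ * (-p + x) = (x - p) / (1 - p) := by
          rw [inv_mul_eq_div]; ring_nf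
        simp only [Set.mem_inter_iff, Set.mem_Ico, Set.mem_preimage, Set.mem_setOf_eq,
          bernDigit, bernShift, hrw]
        constructor
        · rintro ⟨⟨⟨hx0, hx1⟩, hd⟩, hs⟩
          have hxp : ¬ x < p := by by_contra h; rw [if_pos h] at hd; simp at hd
          rw [if_neg hxp] at hs
          refine ⟨hs, ?_, ?_⟩
          · rw [le_div_iff₀ h1p, zero_mul, sub_nonneg]; exact not_lt.mp hxp
          · rw [div_lt_one h1p]; linarith
        · rintro ⟨hs, hy0, hy1⟩
          rw [le_div_iff₀ h1p, zero_mul, sub_nonneg] at hy0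
          rw [div_lt_one h1p] at hy1
          have hx1 : x < 1 := by linarith
          have hxp : ¬ x < p := not_lt.mpr hy0
          exact ⟨⟨⟨by linarith, hx1⟩, by rw [if_neg hxp]⟩, by rw [if_neg hxp]; exact hs⟩
      rw [hset]
      have hAI : MeasurableSet (A ∩ Ico (0:ℝ) 1) := hA.inter measurableSet_Ico
      have hm : MeasurableSet ((fun y => (1 - p)⁻¹ * y) ⁻¹' (A ∩ Ico (0:ℝ) 1)) :=
        (measurable_const_mul _) hAI
      rw [measure_preimage_add volume (-p) _]
      rw [← Measure.map_apply (measurable_const_mul _) hAI,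
        Real.map_volume_mul_left (inv_ne_zero h1p.ne')]
      simp only [inv_inv, Measure.smul_apply, smul_eq_mul, abs_of_pos h1p]
      rfl
  · -- digit true
    rcases eq_or_lt_of_le h0 with h0' | hp0
    · -- p = 0 : empty set
      have hset : Ico (0:ℝ) 1 ∩ {x | bernDigit p x = true} ∩ bernShift p ⁻¹' A = ∅ := by
        ext x
        simp only [Set.mem_inter_iff, Set.mem_Ico, Set.mem_setOf_eq, Set.mem_empty_iff_false,
          iff_false, not_and, bernDigit]
        rintro ⟨⟨hx0, hx1⟩, hd⟩
        have : ¬ x < p := by rw [← h0']; linarith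
        rw [if_neg this] at hd
        simp at hd
      rw [hset]
      simp [W, ← h0']
    · -- 0 < p
      have hset : Ico (0:ℝ) 1 ∩ {x | bernDigit p x = true} ∩ bernShift p ⁻¹' A
          = (fun x => p⁻¹ * x) ⁻¹' (A ∩ Ico (0:ℝ) 1) := by
        ext x
        have hrw : p⁻¹ * x = x / p := by rw [inv_mul_eq_div]
        simp only [Set.mem_inter_iff, Set.mem_Ico, Set.mem_preimage, Set.mem_setOf_eq,
          bernDigit, bernShift, hrw]
        constructor
        · rintro ⟨⟨⟨hx0, hx1⟩, hd⟩, hs⟩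
          have hxp : x < p := by by_contra h; rw [if_neg h] at hd; simp at hd
          rw [if_pos hxp] at hs
          refine ⟨hs, ?_, ?_⟩
          · rw [le_div_iff₀ hp0, zero_mul]; exact hx0
          · rw [div_lt_one hp0]; exact hxp
        · rintro ⟨hs, hy0, hy1⟩
          rw [le_div_iff₀ hp0, zero_mul] at hy0
          rw [div_lt_one hp0] at hy1
          exact ⟨⟨⟨hy0, by linarith⟩, by rw [if_pos hy1]⟩, by rw [if_pos hy1]; exact hs⟩
      rw [hset]
      have hAI : MeasurableSet (A ∩ Ico (0:ℝ) 1) := hA.inter measurableSet_Ico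
      rw [← Measure.map_apply (measurable_const_mul _) hAI,
        Real.map_volume_mul_left (inv_ne_zero hp0.ne')]
      simp only [inv_inv, Measure.smul_apply, smul_eq_mul, abs_of_pos hp0]
      rfl


/-- Key induction: joint law of finitely many digits and the shifted remainder. -/
lemma keyStep {p : ℝ} (h0 : 0 ≤ p) (h1 : p ≤ 1) (n : ℕ) (t : Finset ℕ) (b : ℕ → Bool)
    {A : Set ℝ} (hA : MeasurableSet A) :
    volume (Ico (0:ℝ) 1 ∩ {x | ∀ k ∈ t, k < n → bernDigits p x k = b k}
        ∩ (bernShift p)^[n] ⁻¹' A)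
      = (∏ k ∈ t.filter (· < n), W p (b k)) * volume (A ∩ Ico (0:ℝ) 1) := by
  classical
  induction n generalizing A with
  | zero =>
    have hset : Ico (0:ℝ) 1 ∩ {x | ∀ k ∈ t, k < 0 → bernDigits p x k = b k}
        ∩ (bernShift p)^[0] ⁻¹' A = Ico (0:ℝ) 1 ∩ A := by
      ext x; simp
    have hfil : t.filter (· < 0) = ∅ := by
      ext k; simp
    rw [hset, hfil, Finset.prod_empty, one_mul, Set.inter_comm]
  | succ n ih =>
    set A' : Set ℝ := {y | n ∈ t → bernDigit p y = b n} ∩ bernShift p ⁻¹' A with hA'def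
    have hA' : MeasurableSet A' := by
      apply MeasurableSet.inter
      · rcases Classical.em (n ∈ t) with h | h
        · simp only [h, true_implies]
          exact (measurable_bernDigit p) (measurableSet_singleton (b n))
        · simp only [h, false_implies, Set.setOf_true]
          exact MeasurableSet.univ
      · exact (measurable_bernShift p) hA
    have hset : Ico (0:ℝ) 1 ∩ {x | ∀ k ∈ t, k < n + 1 → bernDigits p x k = b k}
        ∩ (bernShift p)^[n+1] ⁻¹' A
        = Ico (0:ℝ) 1 ∩ {x | ∀ k ∈ t, k < n → bernDigits p x k = b k}
        ∩ (bernShift p)^[n] ⁻¹' A' := by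
      ext x
      simp only [Set.mem_inter_iff, Set.mem_setOf_eq, Set.mem_preimage, hA'def,
        Function.iterate_succ_apply']
      constructor
      · rintro ⟨⟨hI, hdig⟩, hsh⟩
        exact ⟨⟨hI, fun k hk hkn => hdig k hk (by omega)⟩,
          fun hn => hdig n hn (by omega), hsh⟩
      · rintro ⟨⟨hI, hdig⟩, hn, hsh⟩
        refine ⟨⟨hI, fun k hk hkn => ?_⟩, hsh⟩
        rcases Nat.lt_or_ge k n with h | h
        · exact hdig k hk h
        · have : k = n := by omega
          subst this; exact hn hk
    rw [hset, ih hA']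
    -- now compute volume (A' ∩ Ico 0 1)
    have hvol : volume (A' ∩ Ico (0:ℝ) 1)
        = (if n ∈ t then W p (b n) else 1) * volume (A ∩ Ico (0:ℝ) 1) := by
      rcases Classical.em (n ∈ t) with h | h
      · rw [if_pos h]
        have : A' ∩ Ico (0:ℝ) 1
            = Ico (0:ℝ) 1 ∩ {x | bernDigit p x = b n} ∩ bernShift p ⁻¹' A := by
          ext x
          simp only [hA'def, Set.mem_inter_iff, Set.mem_setOf_eq, Set.mem_preimage, h,
            true_implies]
          tauto
        rw [this, oneStep h0 h1 _ hA]
      · rw [if_neg h]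
        have : A' ∩ Ico (0:ℝ) 1
            = (Ico (0:ℝ) 1 ∩ {x | bernDigit p x = true} ∩ bernShift p ⁻¹' A)
            ∪ (Ico (0:ℝ) 1 ∩ {x | bernDigit p x = false} ∩ bernShift p ⁻¹' A) := by
          ext x
          simp only [hA'def, Set.mem_inter_iff, Set.mem_setOf_eq, Set.mem_preimage, h,
            false_implies, Set.mem_union]
          rcases Classical.em (bernDigit p x = true) with hd | hd
          · tauto
          · have : bernDigit p x = false := by
              cases hb : bernDigit p x
              · rfl
              · exact absurd hb hd
            tauto
        rw [this]
        have hdisj : Disjoint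
            (Ico (0:ℝ) 1 ∩ {x | bernDigit p x = true} ∩ bernShift p ⁻¹' A)
            (Ico (0:ℝ) 1 ∩ {x | bernDigit p x = false} ∩ bernShift p ⁻¹' A) := by
          rw [Set.disjoint_left]
          rintro x ⟨⟨-, hx1⟩, -⟩ ⟨⟨-, hx2⟩, -⟩
          simp only [Set.mem_setOf_eq] at hx1 hx2
          rw [hx1] at hx2; exact Bool.noConfusion hx2
        have hmeas : MeasurableSet
            (Ico (0:ℝ) 1 ∩ {x | bernDigit p x = false} ∩ bernShift p ⁻¹' A) := by
          refine (measurableSet_Ico.inter ?_).inter ((measurable_bernShift p) hA)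
          exact (measurable_bernDigit p) (measurableSet_singleton false)
        rw [measure_union hdisj hmeas,
          oneStep h0 h1 true hA, oneStep h0 h1 false hA, ← add_mul,
          W_true_add_W_false h0 h1, one_mul]
    rw [hvol]
    have hfil : t.filter (· < n + 1)
        = if n ∈ t then insert n (t.filter (· < n)) else t.filter (· < n) := by
      rcases Classical.em (n ∈ t) with h | h
      · rw [if_pos h]; ext k
        simp only [Finset.mem_filter, Finset.mem_insert]
        constructor
        · rintro ⟨hk, hkn⟩
          rcases Nat.lt_or_ge k n with h' | h'
          · exact Or.inr ⟨hk, h'⟩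
          · exact Or.inl (by omega)
        · rintro (rfl | ⟨hk, hkn⟩)
          · exact ⟨h, by omega⟩
          · exact ⟨hk, by omega⟩
      · rw [if_neg h]; ext k
        simp only [Finset.mem_filter]
        constructor
        · rintro ⟨hk, hkn⟩
          refine ⟨hk, ?_⟩
          rcases Nat.lt_or_ge k n with h' | h'
          · exact h'
          · have : k = n := by omega
            subst this; exact absurd hk h
        · rintro ⟨hk, hkn⟩; exact ⟨hk, by omega⟩
    rw [hfil]
    rcases Classical.em (n ∈ t) with h | h
    · rw [if_pos h, if_pos h, Finset.prod_insert (by simp)]; ring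
    · rw [if_neg h, if_neg h, one_mul]


/-- Cylinder sets on a product of `Bool`s. -/
def cyl {ι : Type*} (s : Finset ι) (b : ι → Bool) : Set (ι → Bool) := {f | ∀ i ∈ s, f i = b i}

lemma measurableSet_cyl {ι : Type*} (s : Finset ι) (b : ι → Bool) :
    MeasurableSet (cyl s b) := by
  have : cyl s b = ⋂ i ∈ s, (fun f : ι → Bool => f i) ⁻¹' {b i} := by
    ext f; simp [cyl]
  rw [this]
  exact MeasurableSet.biInter s.countable_toSet
    (fun i _ => (measurable_pi_apply i) (measurableSet_singleton (b i)))

lemma betaCyl {p : ℝ} (h0 : 0 ≤ p) (h1 : p ≤ 1) (t : Finset ℕ) (b : ℕ → Bool) :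
    Measure.map (bernDigits p) (volume.restrict (Set.Ico (0 : ℝ) 1)) (cyl t b)
      = ∏ k ∈ t, W p (b k) := by
  classical
  set n := t.sup id + 1 with hn
  have hlt : ∀ k ∈ t, k < n := fun k hk => by
    have := Finset.le_sup (f := id) hk; simp only [id] at this; omega
  rw [Measure.map_apply (measurable_bernDigits p) (measurableSet_cyl t b),
    Measure.restrict_apply ((measurable_bernDigits p) (measurableSet_cyl t b))]
  have hset : bernDigits p ⁻¹' cyl t b ∩ Ico (0:ℝ) 1
      = Ico (0:ℝ) 1 ∩ {x | ∀ k ∈ t, k < n → bernDigits p x k = b k}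
        ∩ (bernShift p)^[n] ⁻¹' univ := by
    ext x
    simp only [Set.mem_inter_iff, Set.mem_preimage, Set.mem_setOf_eq, cyl, Set.mem_univ,
      and_true]
    constructor
    · rintro ⟨hc, hI⟩; exact ⟨hI, fun k hk _ => hc k hk⟩
    · rintro ⟨hI, hc⟩; exact ⟨fun k hk => hc k hk (hlt k hk), hI⟩
  rw [hset, keyStep h0 h1 n t b MeasurableSet.univ]
  rw [Finset.filter_true_of_mem hlt, Set.univ_inter, Real.volume_Ico]
  norm_num

lemma iidBool_cyl {ι : Type*} [Countable ι] {p : ℝ} (h0 : 0 ≤ p) (h1 : p ≤ 1)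
    (s : Finset ι) (b : ι → Bool) :
    iidBool ι p (cyl s b) = ∏ i ∈ s, W p (b i) := by
  classical
  set e := (Countable.exists_injective_nat ι).choose with he_def
  have he : Function.Injective e := (Countable.exists_injective_nat ι).choose_spec
  set b' : ℕ → Bool := fun n => if h : ∃ i, i ∈ s ∧ e i = n then b h.choose else true
    with hb'
  have hJ : Measurable (fun f : ℕ → Bool => fun i : ι => f (e i)) :=
    measurable_pi_lambda _ fun i => measurable_pi_apply (e i)
  rw [iidBool, Measure.map_apply hJ (measurableSet_cyl s b)]
  have hset : (fun f : ℕ → Bool => fun i : ι => f (e i)) ⁻¹' cyl s b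
      = cyl (s.image e) b' := by
    ext f
    simp only [Set.mem_preimage, cyl, Set.mem_setOf_eq, Finset.mem_image]
    constructor
    · rintro hc n ⟨i, hi, rfl⟩
      have hex : ∃ j, j ∈ s ∧ e j = e i := ⟨i, hi, rfl⟩
      have hspec := hex.choose_spec
      have : hex.choose = i := he hspec.2
      rw [hb']
      simp only [dif_pos hex]
      rw [this]
      exact hc i hi
    · intro hc i hi
      have hex : ∃ j, j ∈ s ∧ e j = e i := ⟨i, hi, rfl⟩
      have := hc (e i) ⟨i, hi, rfl⟩
      rw [hb'] at this
      simp only [dif_pos hex] at this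
      have hj : hex.choose = i := he hex.choose_spec.2
      rw [hj] at this
      exact this
  rw [hset, betaCyl h0 h1]
  rw [Finset.prod_image (fun i hi j hj hij => he hij)]
  apply Finset.prod_congr rfl
  intro i hi
  have hex : ∃ j, j ∈ s ∧ e j = e i := ⟨i, hi, rfl⟩
  rw [hb']
  simp only [dif_pos hex]
  rw [he hex.choose_spec.2]

lemma iidBool_isProb {ι : Type*} [Countable ι] {p : ℝ} (h0 : 0 ≤ p) (h1 : p ≤ 1) :
    IsProbabilityMeasure (iidBool ι p) := by
  constructor
  have : (Set.univ : Set (ι → Bool)) = cyl (∅ : Finset ι) (fun _ => true) := by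
    ext f; simp [cyl]
  rw [this, iidBool_cyl h0 h1, Finset.prod_empty]


lemma pi_eq_generateFrom_cyl (ι : Type*) :
    (inferInstance : MeasurableSpace (ι → Bool))
      = .generateFrom {S | ∃ s b, S = cyl s b} := by
  apply le_antisymm
  · rw [show (inferInstance : MeasurableSpace (ι → Bool)) = MeasurableSpace.pi from rfl,
      MeasurableSpace.pi]
    refine iSup_le fun i => ?_
    intro S hS
    rcases hS with ⟨T, -, rfl⟩
    have : (fun f : ι → Bool => f i) ⁻¹' T = ⋃ b ∈ T, cyl {i} (fun _ => b) := by
      ext f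
      simp only [Set.mem_preimage, Set.mem_iUnion, cyl, Set.mem_setOf_eq, Finset.mem_singleton]
      constructor
      · intro h; exact ⟨f i, h, fun j hj => by rw [hj]⟩
      · rintro ⟨b, hb, h⟩; rw [h i rfl]; exact hb
    rw [this]
    exact MeasurableSet.biUnion T.to_countable
      (fun b _ => MeasurableSpace.measurableSet_generateFrom ⟨{i}, fun _ => b, rfl⟩)
  · exact MeasurableSpace.generateFrom_le (by rintro S ⟨s, b, rfl⟩; exact measurableSet_cyl s b)

lemma isPiSystem_cyl (ι : Type*) : IsPiSystem {S : Set (ι → Bool) | ∃ s b, S = cyl s b} := by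
  classical
  rintro S1 ⟨s, b, rfl⟩ S2 ⟨t, c, rfl⟩ hne
  obtain ⟨f₀, hf₀⟩ := hne
  refine ⟨s ∪ t, fun i => if i ∈ s then b i else c i, ?_⟩
  ext f
  simp only [Set.mem_inter_iff, cyl, Set.mem_setOf_eq, Finset.mem_union]
  constructor
  · rintro ⟨h1, h2⟩ i hi
    by_cases his : i ∈ s
    · rw [if_pos his]; exact h1 i his
    · rw [if_neg his]
      rcases hi with hi | hi
      · exact absurd hi his
      · exact h2 i hi
  · intro h
    constructor
    · intro i hi
      have := h i (Or.inl hi)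
      rwa [if_pos hi] at this
    · intro i hi
      by_cases his : i ∈ s
      · have hbc : b i = c i := by
          have h1 := hf₀.1 i his
          have h2 := hf₀.2 i hi
          rw [h1] at h2; exact h2
        have := h i (Or.inl his)
        rw [if_pos his] at this
        rw [this, hbc]
      · have := h i (Or.inr hi)
        rwa [if_neg his] at this

lemma or_sum_eq {p1 q p2 : ℝ} (h10 : 0 ≤ p1) (h11 : p1 ≤ 1) (hq0 : 0 ≤ q) (hq1 : q ≤ 1)
    (hp2 : p2 = p1 + q * (1 - p1)) (b : Bool) :
    ∑ c ∈ Finset.univ.filter (fun c : Bool × Bool => (c.1 || c.2) = b),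
      W p1 c.1 * W q c.2 = W p2 b := by
  have e1 : ENNReal.ofReal p1 * ENNReal.ofReal q = ENNReal.ofReal (p1 * q) :=
    (ENNReal.ofReal_mul h10).symm
  cases b
  · -- false : only (false, false)
    have : Finset.univ.filter (fun c : Bool × Bool => (c.1 || c.2) = false)
        = {(false, false)} := by decide
    rw [this, Finset.sum_singleton]
    simp only [W, if_neg (Bool.false_ne_true), Bool.false_eq_true, if_false]
    rw [← ENNReal.ofReal_mul (by linarith)]
    congr 1
    rw [hp2]; ring
  · have : Finset.univ.filter (fun c : Bool × Bool => (c.1 || c.2) = true)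
        = {(true, true), (true, false), (false, true)} := by decide
    rw [this]
    rw [Finset.sum_insert (by decide), Finset.sum_insert (by decide), Finset.sum_singleton]
    simp only [W, if_pos, Bool.false_eq_true, if_false, if_true]
    rw [← ENNReal.ofReal_mul h10, ← ENNReal.ofReal_mul h10, ← ENNReal.ofReal_mul (by linarith),
      ← ENNReal.ofReal_add (by nlinarith) (by nlinarith),
      ← ENNReal.ofReal_add (by nlinarith) (by nlinarith)]
    congr 1
    rw [hp2]; ring

lemma prodOr_cyl {ι : Type*} [Countable ι] {p1 q p2 : ℝ}
    (h10 : 0 ≤ p1) (h11 : p1 ≤ 1) (hq0 : 0 ≤ q) (hq1 : q ≤ 1)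
    (hp2 : p2 = p1 + q * (1 - p1)) (s : Finset ι) (b : ι → Bool) :
    ((iidBool ι p1).prod (iidBool ι q))
        {z : (ι → Bool) × (ι → Bool) | ∀ i ∈ s, (z.1 i || z.2 i) = b i}
      = ∏ i ∈ s, W p2 (b i) := by
  classical
  haveI := iidBool_isProb (ι := ι) h10 h11
  haveI := iidBool_isProb (ι := ι) hq0 hq1
  set e1 : ({x // x ∈ s} → Bool × Bool) → ι → Bool :=
    fun γ i => if h : i ∈ s then (γ ⟨i, h⟩).1 else true with he1
  set e2 : ({x // x ∈ s} → Bool × Bool) → ι → Bool :=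
    fun γ i => if h : i ∈ s then (γ ⟨i, h⟩).2 else true with he2
  set t : {x // x ∈ s} → Finset (Bool × Bool) :=
    fun i => Finset.univ.filter (fun c : Bool × Bool => (c.1 || c.2) = b i) with ht
  have hdecomp : {z : (ι → Bool) × (ι → Bool) | ∀ i ∈ s, (z.1 i || z.2 i) = b i}
      = ⋃ γ ∈ Fintype.piFinset t, (cyl s (e1 γ)) ×ˢ (cyl s (e2 γ)) := by
    ext z
    simp only [Set.mem_setOf_eq, Set.mem_iUnion, Set.mem_prod, cyl, Fintype.mem_piFinset,
      ht, Finset.mem_filter, Finset.mem_univ, true_and]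
    constructor
    · intro h
      refine ⟨fun i => (z.1 i, z.2 i), fun i => h i i.2, ?_, ?_⟩
      · intro i hi; rw [he1]; simp only [dif_pos hi]
      · intro i hi; rw [he2]; simp only [dif_pos hi]
    · rintro ⟨γ, hγ, h1, h2⟩ i hi
      have e1i := h1 i hi
      have e2i := h2 i hi
      rw [he1] at e1i; rw [he2] at e2i
      simp only [dif_pos hi] at e1i e2i
      rw [e1i, e2i]
      exact hγ ⟨i, hi⟩
  rw [hdecomp]
  rw [measure_biUnion_finset ?hd (fun γ _ => (measurableSet_cyl s (e1 γ)).prod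
      (measurableSet_cyl s (e2 γ)))]
  case hd =>
    intro γ hγ γ' hγ' hne
    rw [Function.onFun, Set.disjoint_left]
    rintro z ⟨hz1, hz2⟩ ⟨hz1', hz2'⟩
    apply hne
    funext i
    have a1 := hz1 i i.2; have a1' := hz1' i i.2
    have a2 := hz2 i i.2; have a2' := hz2' i i.2
    rw [he1] at a1 a1'; rw [he2] at a2 a2'
    simp only [dif_pos i.2, Subtype.coe_eta] at a1 a1' a2 a2'
    have hg : γ i = (z.1 i.1, z.2 i.1) := Prod.ext a1.symm a2.symm
    have hg' : γ' i = (z.1 i.1, z.2 i.1) := Prod.ext a1'.symm a2'.symm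
    rw [hg, hg']
  have hterm : ∀ γ ∈ Fintype.piFinset t,
      ((iidBool ι p1).prod (iidBool ι q)) ((cyl s (e1 γ)) ×ˢ (cyl s (e2 γ)))
        = ∏ i : {x // x ∈ s}, (W p1 (γ i).1 * W q (γ i).2) := by
    intro γ _
    rw [Measure.prod_prod, iidBool_cyl h10 h11, iidBool_cyl hq0 hq1,
      ← Finset.prod_coe_sort s (fun i => W p1 (e1 γ i)),
      ← Finset.prod_coe_sort s (fun i => W q (e2 γ i)),
      ← Finset.prod_mul_distrib]
    apply Finset.prod_congr rfl
    intro i _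
    rw [he1, he2]
    simp only [dif_pos i.2, Subtype.coe_eta]
  rw [Finset.sum_congr rfl hterm, ← Finset.prod_univ_sum t
    (fun i c => W p1 c.1 * W q c.2)]
  rw [← Finset.prod_coe_sort s (fun i => W p2 (b i))]
  exact Finset.prod_congr rfl fun i _ => or_sum_eq h10 h11 hq0 hq1 hp2 (b i)

lemma map_or_iidBool {ι : Type*} [Countable ι] {p1 q p2 : ℝ}
    (h10 : 0 ≤ p1) (h11 : p1 ≤ 1) (hq0 : 0 ≤ q) (hq1 : q ≤ 1)
    (hp2 : p2 = p1 + q * (1 - p1)) :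
    Measure.map (fun z : (ι → Bool) × (ι → Bool) => fun i => z.1 i || z.2 i)
        ((iidBool ι p1).prod (iidBool ι q)) = iidBool ι p2 := by
  classical
  haveI := iidBool_isProb (ι := ι) h10 h11
  haveI := iidBool_isProb (ι := ι) hq0 hq1
  have h20 : 0 ≤ p2 := by nlinarith
  have h21 : p2 ≤ 1 := by nlinarith
  haveI := iidBool_isProb (ι := ι) h20 h21
  have hOR : Measurable (fun z : (ι → Bool) × (ι → Bool) => fun i => z.1 i || z.2 i) := by
    refine measurable_pi_lambda _ fun i => ?_
    have : (fun z : (ι → Bool) × (ι → Bool) => z.1 i || z.2 i)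
        = (fun c : Bool × Bool => c.1 || c.2)
          ∘ (fun z : (ι → Bool) × (ι → Bool) => (z.1 i, z.2 i)) := rfl
    rw [this]
    exact (measurable_of_countable _).comp
      (Measurable.prodMk (by exact (measurable_pi_apply i).comp measurable_fst)
        (by exact (measurable_pi_apply i).comp measurable_snd))
  haveI : IsProbabilityMeasure (Measure.map
      (fun z : (ι → Bool) × (ι → Bool) => fun i => z.1 i || z.2 i)
      ((iidBool ι p1).prod (iidBool ι q))) := Measure.isProbabilityMeasure_map hOR.aemeasurable
  refine ext_of_generate_finite _ (pi_eq_generateFrom_cyl ι) (isPiSystem_cyl ι) ?_ ?_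
  · rintro S ⟨s, b, rfl⟩
    rw [Measure.map_apply hOR (measurableSet_cyl s b)]
    have : (fun z : (ι → Bool) × (ι → Bool) => fun i => z.1 i || z.2 i) ⁻¹' cyl s b
        = {z : (ι → Bool) × (ι → Bool) | ∀ i ∈ s, (z.1 i || z.2 i) = b i} := rfl
    rw [this, prodOr_cyl h10 h11 hq0 hq1 hp2 s b, iidBool_cyl h20 h21]
  · simp



lemma measurable_orMap (ι : Type*) :
    Measurable (fun z : (ι → Bool) × (ι → Bool) => fun i => z.1 i || z.2 i) := by
  refine measurable_pi_lambda _ fun i => ?_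
  have : (fun z : (ι → Bool) × (ι → Bool) => z.1 i || z.2 i)
      = (fun c : Bool × Bool => c.1 || c.2)
        ∘ (fun z : (ι → Bool) × (ι → Bool) => (z.1 i, z.2 i)) := rfl
  rw [this]
  exact (measurable_of_countable _).comp
    (Measurable.prodMk (by exact (measurable_pi_apply i).comp measurable_fst)
      (by exact (measurable_pi_apply i).comp measurable_snd))

lemma seg_same {d : ℕ} (u : Site d) (i : Fin d) (a : ℤ) : seg u i a i = a := by
  unfold seg; simp

lemma seg_noteq {d : ℕ} (u : Site d) (i : Fin d) (a : ℤ) {j : Fin d} (h : j ≠ i) :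
    seg u i a j = u j := by
  unfold seg; exact Function.update_of_ne h a u

lemma seg_seg {d : ℕ} (u : Site d) (i : Fin d) (a c : ℤ) :
    seg (seg u i a) i c = seg u i c := by
  unfold seg; simp

/-- Normal form for a feasible pair whose segment carries the edge `e`. -/
lemma feas_onSeg {d : ℕ} {ω : SiteCfg d} {v w : Site d} {e : EdgeIdx d}
    (hf : FeasiblePair ω v w) (he : EdgeOnSeg e v w) :
    v = seg e.1 e.2 (v e.2) ∧ w = seg e.1 e.2 (w e.2) ∧ v e.2 ≤ e.1 e.2 ∧ e.1 e.2 < w e.2 ∧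
      ω v = true ∧ ω w = true ∧
      ∀ c : ℤ, v e.2 < c → c < w e.2 → ω (seg e.1 e.2 c) = false := by
  obtain ⟨a, b, ha, hb, hva, hwb⟩ := he
  obtain ⟨i, hoff, hlt, h1, h2, hint⟩ := hf
  have hvi : v e.2 = a := by rw [hva]; exact seg_same _ _ _
  have hwi : w e.2 = b := by rw [hwb]; exact seg_same _ _ _
  have hie : i = e.2 := by
    by_contra h
    have := hoff e.2 (fun hc => h hc.symm)
    rw [hvi, hwi] at this
    omega
  subst hie
  refine ⟨by rw [hvi]; exact hva, by rw [hwi]; exact hwb, by omega, by omega, h1, h2, ?_⟩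
  intro c hc1 hc2
  have := hint c hc1 hc2
  rwa [hva, seg_seg] at this

/-- Uniqueness of the feasible pair covering a given edge. -/
lemma cover_unique {d : ℕ} {ω : SiteCfg d} {v w v' w' : Site d} {e : EdgeIdx d}
    (hf : FeasiblePair ω v w) (he : EdgeOnSeg e v w)
    (hf' : FeasiblePair ω v' w') (he' : EdgeOnSeg e v' w') : v = v' ∧ w = w' := by
  obtain ⟨hv, hw, hva, hwb, hocc1, hocc2, hint⟩ := feas_onSeg hf he
  obtain ⟨hv', hw', hva', hwb', hocc1', hocc2', hint'⟩ := feas_onSeg hf' he'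
  have haa : v e.2 = v' e.2 := by
    by_contra h
    rcases lt_or_gt_of_ne h with h' | h'
    · have := hint (v' e.2) h' (by omega)
      rw [← hv'] at this
      rw [hocc1'] at this
      exact Bool.noConfusion this
    · have := hint' (v e.2) h' (by omega)
      rw [← hv] at this
      rw [hocc1] at this
      exact Bool.noConfusion this
  have hbb : w e.2 = w' e.2 := by
    by_contra h
    rcases lt_or_gt_of_ne h with h' | h'
    · have := hint' (w e.2) (by omega) h'
      rw [← hw] at this
      rw [hocc2] at this
      exact Bool.noConfusion this
    · have := hint (w' e.2) (by omega) h'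
      rw [← hw'] at this
      rw [hocc2'] at this
      exact Bool.noConfusion this
  constructor
  · rw [hv, hv', haa]
  · rw [hw, hw', hbb]

/-- Existence of a covering feasible pair from occupied sites on both sides. -/
lemma cover_of_occ {d : ℕ} {ω : SiteCfg d} {e : EdgeIdx d}
    (h1 : ∃ a : ℤ, a ≤ e.1 e.2 ∧ ω (seg e.1 e.2 a) = true)
    (h2 : ∃ b : ℤ, e.1 e.2 < b ∧ ω (seg e.1 e.2 b) = true) :
    ∃ v w : Site d, FeasiblePair ω v w ∧ EdgeOnSeg e v w := by
  obtain ⟨A, hA, hAmax⟩ := Int.exists_greatest_of_bdd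
    (P := fun a => a ≤ e.1 e.2 ∧ ω (seg e.1 e.2 a) = true) ⟨e.1 e.2, fun z hz => hz.1⟩ h1
  obtain ⟨B, hB, hBmin⟩ := Int.exists_least_of_bdd
    (P := fun b => e.1 e.2 < b ∧ ω (seg e.1 e.2 b) = true) ⟨e.1 e.2 + 1, fun z hz => hz.1⟩ h2
  refine ⟨seg e.1 e.2 A, seg e.1 e.2 B, ⟨e.2, ?_, ?_, hA.2, hB.2, ?_⟩, A, B, hA.1, hB.1, rfl, rfl⟩
  · intro j hj
    rw [seg_noteq _ _ _ hj, seg_noteq _ _ _ hj]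
  · rw [seg_same, seg_same]; omega
  · intro c hc1 hc2
    rw [seg_same] at hc1 hc2
    rw [seg_seg]
    by_contra hcon
    have hcc : ω (seg e.1 e.2 c) = true := by
      cases hcase : ω (seg e.1 e.2 c)
      · exact absurd hcase hcon
      · rfl
    rcases le_or_gt c (e.1 e.2) with h | h
    · have := hAmax c ⟨h, hcc⟩; omega
    · have := hBmin c ⟨h, hcc⟩; omega

/-- Nestedness: a denser configuration refines segments. -/
lemma nest {d : ℕ} {ω ω2 : SiteCfg d} (hsub : ∀ v, ω v = true → ω2 v = true)
    {v2 w2 v1 w1 : Site d} {e f : EdgeIdx d}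
    (hf2 : FeasiblePair ω2 v2 w2) (he2 : EdgeOnSeg e v2 w2) (hff2 : EdgeOnSeg f v2 w2)
    (hf1 : FeasiblePair ω v1 w1) (he1 : EdgeOnSeg e v1 w1) : EdgeOnSeg f v1 w1 := by
  obtain ⟨hv2, hw2, hv2le, hw2gt, ho2v, ho2w, hint2⟩ := feas_onSeg hf2 he2
  obtain ⟨hv2f, hw2f, hv2fle, hw2fgt, -, -, -⟩ := feas_onSeg hf2 hff2
  obtain ⟨hv1, hw1, hv1le, hw1gt, ho1v, ho1w, hint1⟩ := feas_onSeg hf1 he1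
  -- the two edges lie on the same line
  have hseg_ef : ∀ c : ℤ, seg e.1 e.2 c = seg f.1 f.2 c := by
    intro c
    have h1 : seg e.1 e.2 c = seg v2 e.2 c := by rw [hv2, seg_seg]
    have h2 : seg f.1 f.2 c = seg v2 f.2 c := by rw [hv2f, seg_seg]
    -- e.2 = f.2
    obtain ⟨i, hoff, hlt, -, -, -⟩ := hf2
    have hie : i = e.2 := by
      by_contra h
      have := hoff e.2 (fun hc => h hc.symm)
      omega
    have hif : i = f.2 := by
      by_contra h
      have := hoff f.2 (fun hc => h hc.symm)
      omega
    rw [h1, h2, ← hie, ← hif]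
  have hvf2 : v2 f.2 = v2 e.2 := by
    have h2 : v2 = seg f.1 f.2 (v2 e.2) := by rw [← hseg_ef, ← hv2]
    have := congrFun h2 f.2
    rwa [seg_same] at this
  have hwf2 : w2 f.2 = w2 e.2 := by
    have h2 : w2 = seg f.1 f.2 (w2 e.2) := by rw [← hseg_ef, ← hw2]
    have := congrFun h2 f.2
    rwa [seg_same] at this
  have hvv : v1 e.2 ≤ v2 e.2 := by
    by_contra h
    push_neg at h
    have hfalse := hint2 (v1 e.2) h (by omega)
    rw [← hv1] at hfalse
    rw [hsub v1 ho1v] at hfalse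
    exact Bool.noConfusion hfalse
  have hww : w2 e.2 ≤ w1 e.2 := by
    by_contra h
    push_neg at h
    have hfalse := hint2 (w1 e.2) (by omega) h
    rw [← hw1] at hfalse
    rw [hsub w1 ho1w] at hfalse
    exact Bool.noConfusion hfalse
  refine ⟨v1 e.2, w1 e.2, by omega, by omega, ?_, ?_⟩
  · rw [← hseg_ef]; exact hv1
  · rw [← hseg_ef]; exact hw1


/-- The edge `e` is covered by a feasible pair of `ω`. -/
def Covers {d : ℕ} (ω : SiteCfg d) (e : EdgeIdx d) : Prop :=
  ∃ vw : Site d × Site d, FeasiblePair ω vw.1 vw.2 ∧ EdgeOnSeg e vw.1 vw.2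

open scoped Classical in
/-- The unique feasible pair covering `e` (junk value if there is none). -/
noncomputable def coverPair {d : ℕ} (ω : SiteCfg d) (e : EdgeIdx d) : Site d × Site d :=
  if h : Covers ω e then h.choose else ((fun _ => 0), (fun _ => 0))

lemma coverPair_spec {d : ℕ} {ω : SiteCfg d} {e : EdgeIdx d} (h : Covers ω e) :
    FeasiblePair ω (coverPair ω e).1 (coverPair ω e).2
      ∧ EdgeOnSeg e (coverPair ω e).1 (coverPair ω e).2 := by
  rw [coverPair, dif_pos h]
  exact h.choose_spec

lemma coverPair_eq {d : ℕ} {ω : SiteCfg d} {e : EdgeIdx d} {v w : Site d}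
    (hf : FeasiblePair ω v w) (he : EdgeOnSeg e v w) : coverPair ω e = (v, w) := by
  have h : Covers ω e := ⟨(v, w), hf, he⟩
  obtain ⟨hf', he'⟩ := coverPair_spec h
  obtain ⟨h1, h2⟩ := cover_unique hf' he' hf he
  exact Prod.ext h1 h2

section Measurability

lemma measurableSet_occ {d : ℕ} (v : Site d) (b : Bool) :
    MeasurableSet {ω : SiteCfg d | ω v = b} := by
  have : {ω : SiteCfg d | ω v = b} = (fun ω : SiteCfg d => ω v) ⁻¹' {b} := rfl
  rw [this]
  exact measurable_pi_apply v (measurableSet_singleton b)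

lemma measurableSet_feas {d : ℕ} (v w : Site d) :
    MeasurableSet {ω : SiteCfg d | FeasiblePair ω v w} := by
  have hrw : {ω : SiteCfg d | FeasiblePair ω v w}
      = ⋃ i : Fin d, ⋃ (_ : (∀ j, j ≠ i → v j = w j) ∧ v i < w i),
        ({ω : SiteCfg d | ω v = true} ∩ ({ω : SiteCfg d | ω w = true} ∩
          ⋂ (c : ℤ), ⋂ (_ : v i < c), ⋂ (_ : c < w i),
            {ω : SiteCfg d | ω (seg v i c) = false})) := by
    ext ω
    simp only [Set.mem_setOf_eq, Set.mem_iUnion, Set.mem_inter_iff, Set.mem_iInter,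
      FeasiblePair]
    constructor
    · rintro ⟨i, h1, h2, h3, h4, h5⟩
      exact ⟨i, ⟨h1, h2⟩, h3, h4, fun c hc1 hc2 => h5 c hc1 hc2⟩
    · rintro ⟨i, ⟨h1, h2⟩, h3, h4, h5⟩
      exact ⟨i, h1, h2, h3, h4, fun c hc1 hc2 => h5 c hc1 hc2⟩
  rw [hrw]
  refine MeasurableSet.iUnion fun i => MeasurableSet.iUnion fun _ => ?_
  refine (measurableSet_occ v true).inter ((measurableSet_occ w true).inter ?_)
  exact MeasurableSet.iInter fun c => MeasurableSet.iInter fun _ =>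
    MeasurableSet.iInter fun _ => measurableSet_occ _ false

lemma measurableSet_edgeOpen {d : ℕ} (e : EdgeIdx d) :
    MeasurableSet {ξ : Cfg d | EdgeOpen ξ e} := by
  have hrw : {ξ : Cfg d | EdgeOpen ξ e}
      = ⋃ vw : Site d × Site d, ⋃ (_ : EdgeOnSeg e vw.1 vw.2),
          ({ω : SiteCfg d | FeasiblePair ω vw.1 vw.2} ×ˢ
            {τ : PairLabels d | τ vw = true}) := by
    ext ξ
    simp only [Set.mem_setOf_eq, Set.mem_iUnion, Set.mem_prod, EdgeOpen]
    constructor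
    · rintro ⟨v, w, h1, h2, h3⟩
      exact ⟨(v, w), h2, h1, h3⟩
    · rintro ⟨⟨v, w⟩, h2, h1, h3⟩
      exact ⟨v, w, h1, h2, h3⟩
  rw [hrw]
  refine MeasurableSet.iUnion fun vw => MeasurableSet.iUnion fun _ =>
    (measurableSet_feas vw.1 vw.2).prod (by
      have : {τ : PairLabels d | τ vw = true} = (fun τ : PairLabels d => τ vw) ⁻¹' {true} := rfl
      rw [this]
      exact measurable_pi_apply vw (measurableSet_singleton true))

lemma measurableSet_allOpen {d : ℕ} (E : Finset (EdgeIdx d)) :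
    MeasurableSet {ξ : Cfg d | ∀ e ∈ E, EdgeOpen ξ e} := by
  have : {ξ : Cfg d | ∀ e ∈ E, EdgeOpen ξ e} = ⋂ e ∈ E, {ξ : Cfg d | EdgeOpen ξ e} := by
    ext ξ; simp only [Set.mem_setOf_eq, Set.mem_iInter]
  rw [this]
  exact MeasurableSet.biInter E.countable_toSet fun e _ => measurableSet_edgeOpen e

lemma measurableSet_covers {d : ℕ} (e : EdgeIdx d) :
    MeasurableSet {ω : SiteCfg d | Covers ω e} := by
  have : {ω : SiteCfg d | Covers ω e}
      = ⋃ vw : Site d × Site d, ⋃ (_ : EdgeOnSeg e vw.1 vw.2),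
          {ω : SiteCfg d | FeasiblePair ω vw.1 vw.2} := by
    ext ω
    simp only [Set.mem_setOf_eq, Set.mem_iUnion, Covers]
    tauto
  rw [this]
  exact MeasurableSet.iUnion fun vw => MeasurableSet.iUnion fun _ =>
    measurableSet_feas vw.1 vw.2

end Measurability

section Coverage

lemma ray_null {d : ℕ} {p : ℝ} (hp0 : 0 < p) (hp1 : p ≤ 1) (e : EdgeIdx d) (g : ℕ → ℤ)
    (hg : Function.Injective g) :
    iidBool (Site d) p {ω : SiteCfg d | ∀ k : ℕ, ω (seg e.1 e.2 (g k)) = false} = 0 := by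
  have hsite : Function.Injective (fun k : ℕ => seg e.1 e.2 (g k)) := by
    intro k k' h
    have h' : seg e.1 e.2 (g k) = seg e.1 e.2 (g k') := h
    have := congrFun h' e.2
    rw [seg_same, seg_same] at this
    exact hg this
  have hbound : ∀ n : ℕ,
      iidBool (Site d) p {ω : SiteCfg d | ∀ k : ℕ, ω (seg e.1 e.2 (g k)) = false}
        ≤ ENNReal.ofReal (1 - p) ^ n := by
    intro n
    have hsub : {ω : SiteCfg d | ∀ k : ℕ, ω (seg e.1 e.2 (g k)) = false}
        ⊆ cyl ((Finset.range n).image (fun k => seg e.1 e.2 (g k))) (fun _ => false) := by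
      intro ω hω
      intro v hv
      simp only [Finset.mem_image, Finset.mem_range] at hv
      obtain ⟨k, -, rfl⟩ := hv
      exact hω k
    refine le_trans (measure_mono hsub) ?_
    rw [iidBool_cyl hp0.le hp1, Finset.prod_const,
      Finset.card_image_of_injective _ hsite, Finset.card_range]
    rfl
  have hlt : ENNReal.ofReal (1 - p) < 1 := by
    rw [← ENNReal.ofReal_one]
    exact ENNReal.ofReal_lt_ofReal_iff_of_nonneg (by linarith) |>.mpr (by linarith)
  have htend := ENNReal.tendsto_pow_atTop_nhds_zero_of_lt_one hlt
  have := ge_of_tendsto htend (Filter.Eventually.of_forall hbound)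
  exact le_antisymm this zero_le

lemma covers_compl_null {d : ℕ} {p : ℝ} (hp0 : 0 < p) (hp1 : p ≤ 1)
    (E : Finset (EdgeIdx d)) :
    iidBool (Site d) p {ω : SiteCfg d | ¬ ∀ e ∈ E, Covers ω e} = 0 := by
  have hsub : {ω : SiteCfg d | ¬ ∀ e ∈ E, Covers ω e}
      ⊆ ⋃ e ∈ E, ({ω : SiteCfg d | ∀ k : ℕ, ω (seg e.1 e.2 (e.1 e.2 - k)) = false}
        ∪ {ω : SiteCfg d | ∀ k : ℕ, ω (seg e.1 e.2 (e.1 e.2 + 1 + k)) = false}) := by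
    intro ω hω
    simp only [Set.mem_setOf_eq, not_forall] at hω
    obtain ⟨e, he, hnc⟩ := hω
    simp only [Set.mem_iUnion, Set.mem_union, Set.mem_setOf_eq]
    refine ⟨e, he, ?_⟩
    by_contra hcon
    push_neg at hcon
    obtain ⟨⟨k1, h1⟩, ⟨k2, h2⟩⟩ := hcon
    apply hnc
    have hb1 : ω (seg e.1 e.2 (e.1 e.2 - k1)) = true := by
      cases h : ω (seg e.1 e.2 (e.1 e.2 - k1))
      · exact absurd h h1
      · rfl
    have hb2 : ω (seg e.1 e.2 (e.1 e.2 + 1 + k2)) = true := by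
      cases h : ω (seg e.1 e.2 (e.1 e.2 + 1 + k2))
      · exact absurd h h2
      · rfl
    obtain ⟨v, w, hf, hs⟩ := cover_of_occ ⟨e.1 e.2 - k1, by omega, hb1⟩
      ⟨e.1 e.2 + 1 + k2, by omega, hb2⟩
    exact ⟨(v, w), hf, hs⟩
  refine measure_mono_null hsub ?_
  refine (measure_biUnion_null_iff E.countable_toSet).mpr fun e _ => ?_
  refine measure_union_null ?_ ?_
  · exact ray_null hp0 hp1 e _ (fun k k' h => by omega)
  · exact ray_null hp0 hp1 e _ (fun k k' h => by omega)

end Coverage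

lemma covers_mono {d : ℕ} {ω ω2 : SiteCfg d} (hsub : ∀ v, ω v = true → ω2 v = true)
    {e : EdgeIdx d} (h : Covers ω e) : Covers ω2 e := by
  obtain ⟨⟨v, w⟩, hf, hs⟩ := h
  obtain ⟨hv, hw, hvle, hwgt, hov, how, -⟩ := feas_onSeg hf hs
  obtain ⟨v', w', hf', hs'⟩ := cover_of_occ
    ⟨v e.2, hvle, by rw [← hv]; exact hsub v hov⟩
    ⟨w e.2, hwgt, by rw [← hw]; exact hsub w how⟩
  exact ⟨(v', w'), hf', hs'⟩

lemma section_measure {d : ℕ} {lam : ℝ} (h0 : 0 ≤ lam) (h1 : lam ≤ 1)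
    (E : Finset (EdgeIdx d)) {ω : SiteCfg d} (hcov : ∀ e ∈ E, Covers ω e) :
    iidBool (Site d × Site d) lam {τ : PairLabels d | ∀ e ∈ E, EdgeOpen (ω, τ) e}
      = ENNReal.ofReal lam ^ (E.image (coverPair ω)).card := by
  have hset : {τ : PairLabels d | ∀ e ∈ E, EdgeOpen (ω, τ) e}
      = cyl (E.image (coverPair ω)) (fun _ => true) := by
    ext τ
    simp only [Set.mem_setOf_eq, cyl, Finset.mem_image]
    constructor
    · rintro h s ⟨e, he, rfl⟩
      obtain ⟨v, w, hf, hs, ht⟩ := h e he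
      rw [coverPair_eq hf hs]
      exact ht
    · intro h e he
      obtain ⟨hf, hs⟩ := coverPair_spec (hcov e he)
      refine ⟨(coverPair ω e).1, (coverPair ω e).2, hf, hs, ?_⟩
      have := h (coverPair ω e) ⟨e, he, rfl⟩
      rwa [Prod.mk.eta]
  rw [hset, iidBool_cyl h0 h1, Finset.prod_const]
  rfl

/-- coverPair of a denser configuration determines the sparser one. -/
lemma coverPair_nest {d : ℕ} {ω ω2 : SiteCfg d} (hsub : ∀ v, ω v = true → ω2 v = true)
    {E : Finset (EdgeIdx d)} (hcov : ∀ e ∈ E, Covers ω e) (hcov2 : ∀ e ∈ E, Covers ω2 e)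
    {e f : EdgeIdx d} (he : e ∈ E) (hf : f ∈ E)
    (heq : coverPair ω2 e = coverPair ω2 f) : coverPair ω e = coverPair ω f := by
  obtain ⟨hf2, hs2⟩ := coverPair_spec (hcov2 e he)
  have hs2f : EdgeOnSeg f (coverPair ω2 e).1 (coverPair ω2 e).2 := by
    rw [heq]; exact (coverPair_spec (hcov2 f hf)).2
  obtain ⟨hf1, hs1⟩ := coverPair_spec (hcov e he)
  have honsegf : EdgeOnSeg f (coverPair ω e).1 (coverPair ω e).2 :=
    nest hsub hf2 hs2 hs2f hf1 hs1
  rw [coverPair_eq hf1 honsegf]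


end Auxiliary

/-- Fix `d ≥ 2`, `λ ∈ [0,1]`. For every finite set `E` of
nearest-neighbour edges of `ℤ^d`, the probability that all edges of `E` are open is
non-increasing in the site parameter `p`. -/
theorem all_open_antitone (d : ℕ) (hd : 2 ≤ d) (lam : ℝ) (hlam : lam ∈ Set.Icc (0 : ℝ) 1)
    (E : Finset (EdgeIdx d)) (p1 p2 : ℝ) (hp1 : 0 < p1) (h12 : p1 < p2) (hp2 : p2 ≤ 1) :
    alignMeasure d p2 lam {ξ | ∀ e ∈ E, EdgeOpen ξ e} ≤
      alignMeasure d p1 lam {ξ | ∀ e ∈ E, EdgeOpen ξ e} := by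
  classical
  obtain ⟨hl0, hl1⟩ := hlam
  have hp11 : p1 ≤ 1 := le_trans h12.le hp2
  have h1p1 : (0:ℝ) < 1 - p1 := by linarith
  set q : ℝ := (p2 - p1) / (1 - p1) with hq
  have hq0 : 0 ≤ q := div_nonneg (by linarith) (by linarith)
  have hq1 : q ≤ 1 := by rw [hq, div_le_one h1p1]; linarith
  have hp2eq : p2 = p1 + q * (1 - p1) := by
    rw [hq, div_mul_cancel₀ _ h1p1.ne']; ring
  have h20 : 0 ≤ p2 := by linarith
  set μ1 := iidBool (Site d) p1 with hμ1
  set μq := iidBool (Site d) q with hμq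
  set ν := iidBool (Site d × Site d) lam with hν
  haveI i1 : IsProbabilityMeasure μ1 := iidBool_isProb hp1.le hp11
  haveI i2 : IsProbabilityMeasure μq := iidBool_isProb hq0 hq1
  haveI i3 : IsProbabilityMeasure ν := iidBool_isProb hl0 hl1
  haveI i4 : IsProbabilityMeasure (iidBool (Site d) p2) := iidBool_isProb h20 hp2
  set A := {ξ : Cfg d | ∀ e ∈ E, EdgeOpen ξ e} with hAdef
  have hA : MeasurableSet A := measurableSet_allOpen E
  have hF : Measurable (fun ω : SiteCfg d => ν (Prod.mk ω ⁻¹' A)) :=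
    measurable_measure_prodMk_left hA
  have hOR := measurable_orMap (Site d)
  -- the a.e. coverage event
  have hae : ∀ᵐ z ∂(μ1.prod μq), ∀ e ∈ E, Covers z.1 e := by
    rw [ae_iff]
    have hnull : (μ1.prod μq) (Prod.fst ⁻¹' {ω : SiteCfg d | ¬ ∀ e ∈ E, Covers ω e}) = 0 := by
      rw [← Set.prod_univ, Measure.prod_prod, covers_compl_null hp1 hp11 E, zero_mul]
    refine measure_mono_null (fun z hz => ?_) hnull
    exact hz
  have key : ∫⁻ z, ν (Prod.mk (fun i => z.1 i || z.2 i) ⁻¹' A) ∂(μ1.prod μq)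
      ≤ ∫⁻ z, ν (Prod.mk z.1 ⁻¹' A) ∂(μ1.prod μq) := by
    refine lintegral_mono_ae ?_
    filter_upwards [hae] with z hz
    set ω := z.1 with hω
    set ω2 : SiteCfg d := fun i => z.1 i || z.2 i with hω2
    have hsub : ∀ v, ω v = true → ω2 v = true := by
      intro v h
      rw [hω2]
      simp only []
      rw [← hω, h, Bool.true_or]
    have hcov2 : ∀ e ∈ E, Covers ω2 e := fun e he => covers_mono hsub (hz e he)
    have hs1 : Prod.mk ω ⁻¹' A = {τ : PairLabels d | ∀ e ∈ E, EdgeOpen (ω, τ) e} := rfl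
    have hs2 : Prod.mk ω2 ⁻¹' A = {τ : PairLabels d | ∀ e ∈ E, EdgeOpen (ω2, τ) e} := rfl
    rw [hs1, hs2, section_measure hl0 hl1 E hz, section_measure hl0 hl1 E hcov2]
    -- card comparison
    set φ : Site d × Site d → Site d × Site d :=
      fun s => if h : ∃ e, e ∈ E ∧ coverPair ω2 e = s then coverPair ω h.choose else s with hφdef
    have hφ : ∀ e ∈ E, φ (coverPair ω2 e) = coverPair ω e := by
      intro e he
      have hex : ∃ e', e' ∈ E ∧ coverPair ω2 e' = coverPair ω2 e := ⟨e, he, rfl⟩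
      rw [hφdef]
      simp only [dif_pos hex]
      exact coverPair_nest hsub hz hcov2 hex.choose_spec.1 he hex.choose_spec.2
    have himg : E.image (coverPair ω) = (E.image (coverPair ω2)).image φ := by
      rw [Finset.image_image]
      exact (Finset.image_congr (fun e he => hφ e he)).symm
    have hcard : (E.image (coverPair ω)).card ≤ (E.image (coverPair ω2)).card := by
      rw [himg]
      exact Finset.card_image_le
    -- pow antitone
    have hx : ENNReal.ofReal lam ≤ 1 := by
      rw [← ENNReal.ofReal_one]
      exact ENNReal.ofReal_le_ofReal hl1
    set c1 := (E.image (coverPair ω)).card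
    set c2 := (E.image (coverPair ω2)).card
    calc ENNReal.ofReal lam ^ c2
        = ENNReal.ofReal lam ^ c1 * ENNReal.ofReal lam ^ (c2 - c1) := by
          rw [← pow_add, Nat.add_sub_cancel' hcard]
      _ ≤ ENNReal.ofReal lam ^ c1 * 1 := mul_le_mul_right (pow_le_one' hx _) _
      _ = ENNReal.ofReal lam ^ c1 := mul_one _
  have hmapfst : Measure.map Prod.fst (μ1.prod μq) = μ1 := Measure.fst_prod
  calc alignMeasure d p2 lam A
      = ∫⁻ ω, ν (Prod.mk ω ⁻¹' A) ∂(iidBool (Site d) p2) := Measure.prod_apply hA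
    _ = ∫⁻ z, ν (Prod.mk (fun i => z.1 i || z.2 i) ⁻¹' A) ∂(μ1.prod μq) := by
        rw [← map_or_iidBool hp1.le hp11 hq0 hq1 hp2eq, lintegral_map hF hOR]
    _ ≤ ∫⁻ z, ν (Prod.mk z.1 ⁻¹' A) ∂(μ1.prod μq) := key
    _ = ∫⁻ ω, ν (Prod.mk ω ⁻¹' A) ∂μ1 := by
        conv_rhs => rw [← hmapfst]
        exact (lintegral_map hF measurable_fst).symm
    _ = alignMeasure d p1 lam A := (Measure.prod_apply hA).symm
end AlignmentPercolation
end

section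
/- Fix d ≥ 2, λ ∈ (0,1) and 0 < p_1 < p_2 ≤ 1, and let μ_1, μ_2 be the laws of the edge configuration σ ∈ {0,1}^{E^d} under ℙ_{p_1,λ,d} and ℙ_{p_2,λ,d} respectively. Then there is no coupling of μ_1 and μ_2 (no probability measure on {0,1}^{E^d} × {0,1}^{E^d} with marginals μ_1 and μ_2) concentrated on the set {(σ_1,σ_2) : σ_1(e) ≤ σ_2(e) for all edges e}, and likewise none concentrated on {(σ_1,σ_2) : σ_2(e) ≤ σ_1(e) for all edges e}. -/
open MeasureTheory ENNReal

namespace AlignmentPercolation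

/-- The law of the edge configuration `σ ∈ {0,1}^{E^d}` under `ℙ_{p,λ,d}`. -/
noncomputable def edgeLaw (d : ℕ) (p lam : ℝ) : Measure (BondCfg d) :=
  (alignMeasure d p lam).map (fun ξ (e : EdgeIdx d) => edgeState ξ e)

section NCaux
open Set
namespace NC

lemma measurable_bernShift (p : ℝ) : Measurable (bernShift p) := by
  unfold bernShift
  exact Measurable.ite (measurableSet_lt measurable_id measurable_const)
    (measurable_id.div_const p) ((measurable_id.sub_const p).div_const (1-p))

lemma measurable_bernDigit (p : ℝ) : Measurable (bernDigit p) := by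
  classical
  unfold bernDigit
  exact Measurable.ite (measurableSet_lt measurable_id measurable_const)
    measurable_const measurable_const

lemma measurable_bernDigits (p : ℝ) : Measurable (bernDigits p) := by
  refine measurable_pi_lambda _ (fun n => ?_)
  exact (measurable_bernDigit p).comp ((measurable_bernShift p).iterate n)

def partialCyl (p : ℝ) (c : ℕ → Option Bool) : Set ℝ :=
  {x | ∀ n v, c n = some v → bernDigits p x n = v}

noncomputable def optW (p : ℝ) : Option Bool → ℝ≥0∞
  | none => 1
  | some true => ENNReal.ofReal p
  | some false => ENNReal.ofReal (1 - p)

lemma measurableSet_partialCyl (p : ℝ) (c : ℕ → Option Bool) :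
    MeasurableSet (partialCyl p c) := by
  have : partialCyl p c = ⋂ n, {x | ∀ v, c n = some v → bernDigits p x n = v} := by
    ext x; simp only [partialCyl, Set.mem_setOf_eq, Set.mem_iInter]
  rw [this]
  refine MeasurableSet.iInter (fun n => ?_)
  rcases hc : c n with _ | v
  · simp [hc]
  · have : {x | ∀ v' : Bool, some v = some v' → bernDigits p x n = v'}
        = (fun x => bernDigits p x n) ⁻¹' {v} := by
      ext x
      simp only [Set.mem_setOf_eq, Set.mem_preimage, Set.mem_singleton_iff, Option.some.injEq]
      constructor
      · intro h; exact h v rfl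
      · rintro h v' rfl; exact h
    rw [this]
    exact (measurable_pi_apply n).comp (measurable_bernDigits p) (measurableSet_singleton v)

lemma vol_affine_preimage {a : ℝ} (ha : 0 < a) (b : ℝ) (S : Set ℝ) :
    volume ((fun x => (x - b) / a) ⁻¹' S) = ENNReal.ofReal a * volume S := by
  have h1 : (fun x : ℝ => (x - b) / a) = (fun y : ℝ => a⁻¹ * y) ∘ (fun x : ℝ => x + (-b)) := by
    funext x; simp only [Function.comp_apply, div_eq_inv_mul]; ring
  rw [h1, Set.preimage_comp, measure_preimage_add_right,
    Real.volume_preimage_mul_left (inv_ne_zero ha.ne')]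
  congr 1
  rw [inv_inv, abs_of_pos ha]


lemma mem_partialCyl_succ (p : ℝ) (c : ℕ → Option Bool) (x : ℝ) :
    x ∈ partialCyl p c ↔
      (∀ v, c 0 = some v → bernDigit p x = v) ∧
        bernShift p x ∈ partialCyl p (fun n => c (n + 1)) := by
  constructor
  · intro h
    refine ⟨fun v hv => h 0 v hv, fun n v hv => ?_⟩
    have := h (n + 1) v hv
    rwa [bernDigits, Function.iterate_succ_apply] at this
  · rintro ⟨h0, h1⟩ n v hv
    cases n with
    | zero => exact h0 v hv
    | succ m =>
      have := h1 m v hv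
      rwa [bernDigits, ← Function.iterate_succ_apply (bernShift p)] at this

lemma digit_cyl {p : ℝ} (hp0 : 0 < p) (hp1 : p ≤ 1) :
    ∀ (N : ℕ) (c : ℕ → Option Bool), (∀ n, N ≤ n → c n = none) →
      volume (Ico (0:ℝ) 1 ∩ partialCyl p c) = ∏ n ∈ Finset.range N, optW p (c n) := by
  intro N
  induction N with
  | zero =>
    intro c hc
    have : partialCyl p c = univ := by
      ext x; simp only [partialCyl, mem_setOf_eq, mem_univ, iff_true]
      intro n v hv; rw [hc n (Nat.zero_le n)] at hv; exact absurd hv (by simp)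
    rw [this, inter_univ, Real.volume_Ico]
    simp
  | succ N ih =>
    intro c hc
    set c' : ℕ → Option Bool := fun n => c (n + 1) with hc'def
    have hc' : ∀ n, N ≤ n → c' n = none := fun n hn => hc (n + 1) (by omega)
    set S' := Ico (0:ℝ) 1 ∩ partialCyl p c' with hS'def
    have hv' : volume S' = ∏ n ∈ Finset.range N, optW p (c' n) := ih c' hc'
    -- the true branch
    have hBt : (Ico (0:ℝ) 1 ∩ {x | x < p}) ∩ (bernShift p ⁻¹' partialCyl p c')
        = (fun x => (x - 0) / p) ⁻¹' S' := by
      ext x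
      simp only [mem_inter_iff, mem_Ico, mem_setOf_eq, mem_preimage, sub_zero, hS'def]
      constructor
      · rintro ⟨⟨⟨hx0, hx1⟩, hxp⟩, hsh⟩
        have hsx : bernShift p x = x / p := if_pos hxp
        exact ⟨⟨div_nonneg hx0 hp0.le, (div_lt_one hp0).mpr hxp⟩, by rwa [hsx] at hsh⟩
      · rintro ⟨⟨h0, h1⟩, hpc⟩
        have hx0 : 0 ≤ x := by
          by_contra h
          push_neg at h
          exact absurd h0 (not_le.mpr (div_neg_of_neg_of_pos h hp0))
        have hxp : x < p := (div_lt_one hp0).mp h1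
        have hsx : bernShift p x = x / p := if_pos hxp
        exact ⟨⟨⟨hx0, lt_of_lt_of_le hxp hp1⟩, hxp⟩, by rwa [hsx]⟩
    have volBt : volume ((Ico (0:ℝ) 1 ∩ {x | x < p}) ∩ (bernShift p ⁻¹' partialCyl p c'))
        = ENNReal.ofReal p * volume S' := by
      rw [hBt, vol_affine_preimage hp0]
    -- the false branch
    have volBf : volume ((Ico (0:ℝ) 1 ∩ {x | ¬ x < p}) ∩ (bernShift p ⁻¹' partialCyl p c'))
        = ENNReal.ofReal (1 - p) * volume S' := by
      rcases lt_or_eq_of_le hp1 with hplt | hpeq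
      · have hBf : (Ico (0:ℝ) 1 ∩ {x | ¬ x < p}) ∩ (bernShift p ⁻¹' partialCyl p c')
            = (fun x => (x - p) / (1 - p)) ⁻¹' S' := by
          ext x
          simp only [mem_inter_iff, mem_Ico, mem_setOf_eq, mem_preimage, hS'def, not_lt]
          constructor
          · rintro ⟨⟨⟨hx0, hx1⟩, hxp⟩, hsh⟩
            have hsx : bernShift p x = (x - p) / (1 - p) := if_neg (not_lt.mpr hxp)
            refine ⟨⟨div_nonneg (by linarith) (by linarith), ?_⟩, by rwa [hsx] at hsh⟩
            rw [div_lt_one (by linarith)]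
            linarith
          · rintro ⟨⟨h0, h1⟩, hpc⟩
            have hxp : p ≤ x := by
              by_contra h
              push_neg at h
              exact absurd h0 (not_le.mpr (div_neg_of_neg_of_pos (by linarith) (by linarith)))
            have hx1 : x < 1 := by
              rw [div_lt_one (by linarith)] at h1
              linarith
            have hsx : bernShift p x = (x - p) / (1 - p) := if_neg (not_lt.mpr hxp)
            exact ⟨⟨⟨by linarith, hx1⟩, hxp⟩, by rwa [hsx]⟩
        rw [hBf, vol_affine_preimage (by linarith)]
      · have : (Ico (0:ℝ) 1 ∩ {x | ¬ x < p}) ∩ (bernShift p ⁻¹' partialCyl p c') = ∅ := by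
          ext x
          simp only [mem_inter_iff, mem_Ico, mem_setOf_eq, mem_empty_iff_false, iff_false, not_lt,
            not_and]
          rintro ⟨⟨hx0, hx1⟩, hxp⟩
          rw [← hpeq] at hx1
          exact absurd hxp (not_le.mpr hx1)
        rw [this, ← hpeq]
        simp
    -- measurability
    have hmp : MeasurableSet (bernShift p ⁻¹' partialCyl p c') :=
      measurable_bernShift p (measurableSet_partialCyl p c')
    have hmf : MeasurableSet ((Ico (0:ℝ) 1 ∩ {x | ¬ x < p}) ∩ (bernShift p ⁻¹' partialCyl p c')) :=
      ((measurableSet_Ico.inter (measurableSet_lt measurable_id measurable_const).compl).inter hmp)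
    have hdisj : Disjoint ((Ico (0:ℝ) 1 ∩ {x | x < p}) ∩ (bernShift p ⁻¹' partialCyl p c'))
        ((Ico (0:ℝ) 1 ∩ {x | ¬ x < p}) ∩ (bernShift p ⁻¹' partialCyl p c')) := by
      refine Set.disjoint_left.mpr ?_
      rintro x ⟨⟨-, hx⟩, -⟩ ⟨⟨-, hx'⟩, -⟩
      exact hx' hx
    -- now split on c 0
    have prodsucc : ∏ n ∈ Finset.range (N + 1), optW p (c n)
        = (∏ n ∈ Finset.range N, optW p (c' n)) * optW p (c 0) :=
      Finset.prod_range_succ' (fun n => optW p (c n)) N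
    rcases h0 : c 0 with _ | v
    · have hsplit : Ico (0:ℝ) 1 ∩ partialCyl p c
          = ((Ico (0:ℝ) 1 ∩ {x | x < p}) ∩ (bernShift p ⁻¹' partialCyl p c'))
            ∪ ((Ico (0:ℝ) 1 ∩ {x | ¬ x < p}) ∩ (bernShift p ⁻¹' partialCyl p c')) := by
        ext x
        simp only [mem_inter_iff, mem_union, mem_setOf_eq, mem_preimage,
          mem_partialCyl_succ p c x, h0]
        constructor
        · rintro ⟨hx, -, hsh⟩
          by_cases hxp : x < p
          · exact Or.inl ⟨⟨hx, hxp⟩, hsh⟩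
          · exact Or.inr ⟨⟨hx, hxp⟩, hsh⟩
        · rintro (⟨⟨hx, -⟩, hsh⟩ | ⟨⟨hx, -⟩, hsh⟩) <;>
            exact ⟨hx, fun v hv => by simp at hv, hsh⟩
      rw [hsplit, measure_union hdisj hmf, volBt, volBf, prodsucc, ← hv', h0]
      have : ENNReal.ofReal p * volume S' + ENNReal.ofReal (1 - p) * volume S'
          = (ENNReal.ofReal p + ENNReal.ofReal (1 - p)) * volume S' := by ring
      rw [this, ← ENNReal.ofReal_add hp0.le (by linarith)]
      simp [optW]
    · rcases v with _ | _
      -- v = false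
      · have hsplit : Ico (0:ℝ) 1 ∩ partialCyl p c
            = (Ico (0:ℝ) 1 ∩ {x | ¬ x < p}) ∩ (bernShift p ⁻¹' partialCyl p c') := by
          ext x
          simp only [mem_inter_iff, mem_setOf_eq, mem_preimage, mem_partialCyl_succ p c x, h0]
          constructor
          · rintro ⟨hx, hd, hsh⟩
            have := hd false rfl
            unfold bernDigit at this
            by_cases hxp : x < p
            · rw [if_pos hxp] at this; exact absurd this (by simp)
            · exact ⟨⟨hx, hxp⟩, hsh⟩
          · rintro ⟨⟨hx, hxp⟩, hsh⟩
            refine ⟨hx, ?_, hsh⟩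
            rintro v hv
            have hv' : v = false := by simpa using hv.symm
            rw [hv']
            unfold bernDigit
            rw [if_neg hxp]
        rw [hsplit, volBf, prodsucc, ← hv', h0]
        simp [optW, mul_comm]
      -- v = true
      · have hsplit : Ico (0:ℝ) 1 ∩ partialCyl p c
            = (Ico (0:ℝ) 1 ∩ {x | x < p}) ∩ (bernShift p ⁻¹' partialCyl p c') := by
          ext x
          simp only [mem_inter_iff, mem_setOf_eq, mem_preimage, mem_partialCyl_succ p c x, h0]
          constructor
          · rintro ⟨hx, hd, hsh⟩
            have := hd true rfl
            unfold bernDigit at this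
            by_cases hxp : x < p
            · exact ⟨⟨hx, hxp⟩, hsh⟩
            · rw [if_neg hxp] at this; exact absurd this (by simp)
          · rintro ⟨⟨hx, hxp⟩, hsh⟩
            refine ⟨hx, ?_, hsh⟩
            rintro v hv
            have hv' : v = true := by simpa using hv.symm
            rw [hv']
            unfold bernDigit
            rw [if_pos hxp]
        rw [hsplit, volBt, prodsucc, ← hv', h0]
        simp [optW, mul_comm]

lemma measurableSet_boolCyl {ι : Type*}
    (s : Finset ι) (b : ι → Bool) :
    MeasurableSet {f : ι → Bool | ∀ i ∈ s, f i = b i} := by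
  have : {f : ι → Bool | ∀ i ∈ s, f i = b i} = ⋂ i ∈ s, (fun f : ι → Bool => f i) ⁻¹' {b i} := by
    ext f; simp
  rw [this]
  exact MeasurableSet.biInter s.countable_toSet
    (fun i _ => measurable_pi_apply i (measurableSet_singleton (b i)))

open scoped Classical in
lemma iidBool_cyl {ι : Type*} [Countable ι] {p : ℝ} (hp0 : 0 < p) (hp1 : p ≤ 1)
    (s : Finset ι) (b : ι → Bool) :
    iidBool ι p {f | ∀ i ∈ s, f i = b i}
      = ∏ i ∈ s, (bif b i then ENNReal.ofReal p else ENNReal.ofReal (1 - p)) := by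
  classical
  set e : ι → ℕ := (Countable.exists_injective_nat ι).choose with he_def
  have he : Function.Injective e := (Countable.exists_injective_nat ι).choose_spec
  set G : (ℕ → Bool) → ι → Bool := fun f i => f (e i) with hG_def
  have hG : Measurable G := measurable_pi_lambda _ (fun i => measurable_pi_apply (e i))
  set C : Set (ι → Bool) := {f | ∀ i ∈ s, f i = b i} with hC_def
  have hC : MeasurableSet C := measurableSet_boolCyl s b
  set c : ℕ → Option Bool := fun n => if h : ∃ i ∈ s, e i = n then some (b h.choose) else none
    with hc_def
  have hce : ∀ i ∈ s, c (e i) = some (b i) := by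
    intro i hi
    have hex : ∃ j ∈ s, e j = e i := ⟨i, hi, rfl⟩
    have : c (e i) = some (b hex.choose) := dif_pos hex
    rw [this, he hex.choose_spec.2]
  have hcn : ∀ n, (¬ ∃ i ∈ s, e i = n) → c n = none := fun n h => dif_neg h
  have hpre : bernDigits p ⁻¹' (G ⁻¹' C) = partialCyl p c := by
    ext x
    simp only [mem_preimage, hC_def, hG_def, mem_setOf_eq, partialCyl]
    constructor
    · intro h n v hv
      by_cases hex : ∃ i ∈ s, e i = n
      · have hcv : c n = some (b hex.choose) := dif_pos hex
        rw [hcv] at hv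
        obtain ⟨hi, hei⟩ := hex.choose_spec
        rw [← hei, ← Option.some.injEq _ _ |>.mp hv]
        exact h _ hi
      · rw [hcn n hex] at hv; exact absurd hv (by simp)
    · intro h i hi
      exact h (e i) (b i) (hce i hi)
  obtain ⟨N, hN⟩ := Finset.exists_nat_subset_range (s.image e)
  have hnone : ∀ n, N ≤ n → c n = none := by
    intro n hn
    refine hcn n ?_
    rintro ⟨i, hi, hei⟩
    have : n ∈ Finset.range N := hN (Finset.mem_image.mpr ⟨i, hi, hei⟩)
    simp at this; omega
  have hmap : iidBool ι p C = volume (Ico (0:ℝ) 1 ∩ partialCyl p c) := by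
    rw [iidBool, Measure.map_apply hG hC, Measure.map_apply (measurable_bernDigits p) (hG hC)]
    rw [Measure.restrict_apply (measurable_bernDigits p (hG hC))]
    rw [hpre, inter_comm]
  rw [hmap, digit_cyl hp0 hp1 N c hnone]
  rw [← Finset.prod_subset hN (fun n _ hn => ?_)]
  · rw [Finset.prod_image (fun i _ j _ h => he h)]
    refine Finset.prod_congr rfl (fun i hi => ?_)
    rw [hce i hi]
    cases b i <;> rfl
  · have : c n = none := hcn n (by
      rintro ⟨i, hi, hei⟩
      exact hn (Finset.mem_image.mpr ⟨i, hi, hei⟩))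
    rw [this]; rfl

lemma iidBool_univ {ι : Type*} [Countable ι] {p : ℝ} (hp0 : 0 < p) (hp1 : p ≤ 1) :
    iidBool ι p univ = 1 := by
  have := iidBool_cyl (ι := ι) hp0 hp1 ∅ (fun _ => true)
  simpa using this

lemma isProbabilityMeasure_iidBool {ι : Type*} [Countable ι] {p : ℝ}
    (hp0 : 0 < p) (hp1 : p ≤ 1) : IsProbabilityMeasure (iidBool ι p) :=
  ⟨iidBool_univ hp0 hp1⟩


variable {d : ℕ}

def line (d : ℕ) (i0 : Fin d) (a : ℤ) : Site d := seg 0 i0 a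

lemma line_apply_self (i0 : Fin d) (a : ℤ) : line d i0 a i0 = a := by
  simp [line, seg]

lemma line_inj (i0 : Fin d) : Function.Injective (line d i0) := by
  intro a b h
  have := congrFun h i0
  rwa [line_apply_self, line_apply_self] at this

lemma seg_line (i0 : Fin d) (t a : ℤ) : seg (line d i0 t) i0 a = line d i0 a :=
  Function.update_idem ..

lemma line_apply_ne (i0 : Fin d) (a : ℤ) {j : Fin d} (hj : j ≠ i0) : line d i0 a j = 0 := by
  simp [line, seg, Function.update_of_ne hj]

lemma up_line (i0 : Fin d) (t : ℤ) : up (line d i0 t) i0 = line d i0 (t + 1) := by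
  unfold up
  rw [line_apply_self, seg_line]

lemma line_zero (i0 : Fin d) : line d i0 0 = (0 : Site d) := by
  funext j
  by_cases hj : j = i0
  · subst hj; rw [line_apply_self]; rfl
  · rw [line_apply_ne _ _ hj]; rfl

lemma edgeOpen_iff (i0 : Fin d) (ξ : Cfg d) (t : ℤ) :
    EdgeOpen ξ (line d i0 t, i0) ↔
      ∃ a b : ℤ, a ≤ t ∧ t < b ∧ ξ.1 (line d i0 a) = true ∧ ξ.1 (line d i0 b) = true ∧
        (∀ c, a < c → c < b → ξ.1 (line d i0 c) = false) ∧
        ξ.2 (line d i0 a, line d i0 b) = true := by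
  constructor
  · rintro ⟨v, w, ⟨i, hoff, hlt, hv, hw, hgap⟩, ⟨a, b, hat, htb, hva, hwb⟩, hlab⟩
    simp only at hva hwb hat htb
    rw [seg_line] at hva hwb
    rw [line_apply_self] at hat htb
    subst hva; subst hwb
    have hii : i = i0 := by
      by_contra hne
      rw [line_apply_ne i0 a hne, line_apply_ne i0 b hne] at hlt
      exact lt_irrefl 0 hlt
    subst hii
    rw [line_apply_self, line_apply_self] at hlt
    refine ⟨a, b, hat, htb, hv, hw, fun c hc1 hc2 => ?_, hlab⟩
    have := hgap c (by rwa [line_apply_self]) (by rwa [line_apply_self])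
    rwa [seg_line] at this
  · rintro ⟨a, b, hat, htb, ha, hb, hgap, hlab⟩
    refine ⟨line d i0 a, line d i0 b, ⟨i0, ?_, ?_, ha, hb, ?_⟩, ⟨a, b, ?_, ?_, ?_, ?_⟩, hlab⟩
    · intro j hj; rw [line_apply_ne _ _ hj, line_apply_ne _ _ hj]
    · rw [line_apply_self, line_apply_self]; omega
    · intro c hc1 hc2
      rw [line_apply_self] at hc1 hc2
      rw [seg_line]
      exact hgap c hc1 hc2
    · simp only; rwa [line_apply_self]
    · simp only; rwa [line_apply_self]
    · simp only; rw [seg_line]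
    · simp only; rw [seg_line]

lemma straddle_unique (i0 : Fin d) (ω : SiteCfg d) {t a b a' b' : ℤ}
    (h1 : a ≤ t) (h2 : t < b) (h1' : a' ≤ t) (h2' : t < b')
    (ha : ω (line d i0 a) = true) (hb : ω (line d i0 b) = true)
    (ha' : ω (line d i0 a') = true) (hb' : ω (line d i0 b') = true)
    (hg : ∀ c, a < c → c < b → ω (line d i0 c) = false)
    (hg' : ∀ c, a' < c → c < b' → ω (line d i0 c) = false) :
    a = a' ∧ b = b' := by
  constructor
  · rcases lt_trichotomy a a' with h | h | h
    · have := hg a' h (by omega)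
      rw [ha'] at this; exact absurd this (by simp)
    · exact h
    · have := hg' a h (by omega)
      rw [ha] at this; exact absurd this (by simp)
  · rcases lt_trichotomy b b' with h | h | h
    · have := hg' b (by omega) h
      rw [hb] at this; exact absurd this (by simp)
    · exact h
    · have := hg b' (by omega) h
      rw [hb'] at this; exact absurd this (by simp)

def siteCyl (d : ℕ) (i0 : Fin d) (S : Finset ℤ) (g : ℤ → Bool) : Set (SiteCfg d) :=
  {ω | ∀ z ∈ S, ω (line d i0 z) = g z}

lemma siteCyl_eq (i0 : Fin d) (S : Finset ℤ) (g : ℤ → Bool) :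
    siteCyl d i0 S g = {f : Site d → Bool | ∀ v ∈ S.image (line d i0), f v = g (v i0)} := by
  ext ω
  simp only [siteCyl, mem_setOf_eq, Finset.mem_image]
  constructor
  · rintro h v ⟨z, hz, rfl⟩
    rw [line_apply_self]
    exact h z hz
  · intro h z hz
    have := h (line d i0 z) ⟨z, hz, rfl⟩
    rwa [line_apply_self] at this

lemma measurableSet_siteCyl (i0 : Fin d) (S : Finset ℤ) (g : ℤ → Bool) :
    MeasurableSet (siteCyl d i0 S g) := by
  rw [siteCyl_eq]
  exact measurableSet_boolCyl _ _

lemma iid_siteCyl {p : ℝ} (hp0 : 0 < p) (hp1 : p ≤ 1) (i0 : Fin d) (S : Finset ℤ) (g : ℤ → Bool) :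
    iidBool (Site d) p (siteCyl d i0 S g)
      = ∏ z ∈ S, (bif g z then ENNReal.ofReal p else ENNReal.ofReal (1 - p)) := by
  rw [siteCyl_eq, iidBool_cyl hp0 hp1]
  rw [Finset.prod_image (fun a _ b _ h => line_inj i0 h)]
  exact Finset.prod_congr rfl (fun z _ => by rw [line_apply_self])

lemma iid_label_one {lam : ℝ} (hl0 : 0 < lam) (hl1 : lam ≤ 1) (x : Site d × Site d) :
    iidBool (Site d × Site d) lam {η : PairLabels d | η x = true} = ENNReal.ofReal lam := by
  classical
  have : {η : PairLabels d | η x = true}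
      = {η : PairLabels d | ∀ y ∈ ({x} : Finset (Site d × Site d)), η y = true} := by
    ext η; simp
  rw [this, iidBool_cyl hl0 hl1]
  simp

lemma iid_label_two {lam : ℝ} (hl0 : 0 < lam) (hl1 : lam ≤ 1) (x y : Site d × Site d)
    (hxy : x ≠ y) :
    iidBool (Site d × Site d) lam {η : PairLabels d | η x = true ∧ η y = true}
      = ENNReal.ofReal lam * ENNReal.ofReal lam := by
  classical
  have : {η : PairLabels d | η x = true ∧ η y = true}
      = {η : PairLabels d | ∀ z ∈ ({x, y} : Finset (Site d × Site d)), η z = true} := by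
    ext η; simp
  rw [this, iidBool_cyl hl0 hl1, Finset.prod_pair hxy]
  rfl

lemma measurableSet_label_one (x : Site d × Site d) :
    MeasurableSet {η : PairLabels d | η x = true} := by
  have : {η : PairLabels d | η x = true} = (fun η : PairLabels d => η x) ⁻¹' {true} := by
    ext η; simp
  rw [this]
  exact measurable_pi_apply x (measurableSet_singleton true)

lemma measurableSet_label_two (x y : Site d × Site d) :
    MeasurableSet {η : PairLabels d | η x = true ∧ η y = true} := by
  have : {η : PairLabels d | η x = true ∧ η y = true}
      = ((fun η : PairLabels d => η x) ⁻¹' {true}) ∩ ((fun η : PairLabels d => η y) ⁻¹' {true}) := by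
    ext η; simp
  rw [this]
  exact (measurable_pi_apply x (measurableSet_singleton true)).inter
    (measurable_pi_apply y (measurableSet_singleton true))

lemma mem_Wset_iff (i0 : Fin d) {a b : ℤ} (hab : a < b) (ω : SiteCfg d) :
    ω ∈ siteCyl d i0 (Finset.Icc a b) (fun z => decide (z = a ∨ z = b)) ↔
      ω (line d i0 a) = true ∧ ω (line d i0 b) = true ∧
        ∀ c, a < c → c < b → ω (line d i0 c) = false := by
  simp only [siteCyl, mem_setOf_eq, Finset.mem_Icc]
  constructor
  · intro h
    refine ⟨?_, ?_, fun c hc1 hc2 => ?_⟩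
    · have := h a ⟨le_refl a, hab.le⟩; simpa using this
    · have := h b ⟨hab.le, le_refl b⟩; simpa using this
    · have := h c ⟨by omega, by omega⟩
      have h1 : c ≠ a := by omega
      have h2 : c ≠ b := by omega
      simpa [h1, h2] using this
  · rintro ⟨ha, hb, hgap⟩ z ⟨hz1, hz2⟩
    by_cases hza : z = a
    · subst hza; simpa using ha
    · by_cases hzb : z = b
      · subst hzb; simpa using hb
      · have := hgap z (by omega) (by omega)
        simpa [hza, hzb] using this

lemma mem_W2set_iff (i0 : Fin d) {a b : ℤ} (ha : a ≤ 0) (hb : 2 ≤ b) (ω : SiteCfg d) :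
    ω ∈ siteCyl d i0 (Finset.Icc a b) (fun z => decide (z = a ∨ z = 1 ∨ z = b)) ↔
      ω (line d i0 a) = true ∧ ω (line d i0 1) = true ∧ ω (line d i0 b) = true ∧
        ∀ c, a < c → c < b → c ≠ 1 → ω (line d i0 c) = false := by
  simp only [siteCyl, mem_setOf_eq, Finset.mem_Icc]
  constructor
  · intro h
    refine ⟨?_, ?_, ?_, fun c hc1 hc2 hc3 => ?_⟩
    · have := h a ⟨le_refl a, by omega⟩; simpa using this
    · have := h 1 ⟨by omega, by omega⟩
      have h1 : (1:ℤ) ≠ a := by omega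
      have h2 : (1:ℤ) ≠ b := by omega
      simpa [h1, h2] using this
    · have := h b ⟨by omega, le_refl b⟩
      have h1 : b ≠ a := by omega
      have h2 : b ≠ 1 := by omega
      simpa [h1, h2] using this
    · have := h c ⟨by omega, by omega⟩
      have h1 : c ≠ a := by omega
      have h2 : c ≠ b := by omega
      simpa [h1, h2, hc3] using this
  · rintro ⟨h1, h2, h3, hgap⟩ z ⟨hz1, hz2⟩
    by_cases hza : z = a
    · subst hza; simpa using h1
    · by_cases hz1' : z = 1
      · subst hz1'; simpa using h2
      · by_cases hzb : z = b
        · subst hzb; simpa using h3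
        · have := hgap z (by omega) (by omega) hz1'
          simpa [hza, hz1', hzb] using this

lemma iid_Wset {p : ℝ} (hp0 : 0 < p) (hp1 : p ≤ 1) (i0 : Fin d) {a b : ℤ} (hab : a < b) :
    iidBool (Site d) p (siteCyl d i0 (Finset.Icc a b) (fun z => decide (z = a ∨ z = b)))
      = ENNReal.ofReal p ^ 2 * ENNReal.ofReal (1 - p) ^ (b - a - 1).toNat := by
  rw [iid_siteCyl hp0 hp1]
  have hsub : ({a, b} : Finset ℤ) ⊆ Finset.Icc a b := by
    intro z hz
    simp only [Finset.mem_insert, Finset.mem_singleton] at hz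
    rcases hz with rfl | rfl <;> simp [Finset.mem_Icc] <;> omega
  rw [← Finset.prod_sdiff hsub, Finset.Icc_diff_both, Finset.prod_pair hab.ne]
  have h1 : ∏ z ∈ Finset.Ioo a b, (bif decide (z = a ∨ z = b) then ENNReal.ofReal p
      else ENNReal.ofReal (1 - p)) = ENNReal.ofReal (1 - p) ^ (b - a - 1).toNat := by
    rw [Finset.prod_congr rfl (fun z hz => ?_), Finset.prod_const, Int.card_Ioo]
    have hz' := Finset.mem_Ioo.mp hz
    have h1 : z ≠ a := by omega
    have h2 : z ≠ b := by omega
    simp [h1, h2]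
  rw [h1]
  have h2 : (bif decide (a = a ∨ a = b) then ENNReal.ofReal p else ENNReal.ofReal (1 - p))
      = ENNReal.ofReal p := by simp
  have h3 : (bif decide (b = a ∨ b = b) then ENNReal.ofReal p else ENNReal.ofReal (1 - p))
      = ENNReal.ofReal p := by simp
  rw [h2, h3]
  ring

lemma iid_W2set {p : ℝ} (hp0 : 0 < p) (hp1 : p ≤ 1) (i0 : Fin d) {a b : ℤ}
    (ha : a ≤ 0) (hb : 2 ≤ b) :
    iidBool (Site d) p (siteCyl d i0 (Finset.Icc a b) (fun z => decide (z = a ∨ z = 1 ∨ z = b)))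
      = ENNReal.ofReal p ^ 3 * ENNReal.ofReal (1 - p) ^ (b - a - 2).toNat := by
  classical
  rw [iid_siteCyl hp0 hp1]
  have hsub : ({a, 1, b} : Finset ℤ) ⊆ Finset.Icc a b := by
    intro z hz
    simp only [Finset.mem_insert, Finset.mem_singleton] at hz
    rcases hz with rfl | rfl | rfl <;> simp [Finset.mem_Icc] <;> omega
  rw [← Finset.prod_sdiff hsub]
  have hcard3 : ({a, 1, b} : Finset ℤ).card = 3 := by
    rw [Finset.card_insert_of_notMem (by simp; omega),
      Finset.card_insert_of_notMem (by simp; omega), Finset.card_singleton]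
  have h1 : ∏ z ∈ Finset.Icc a b \ {a, 1, b}, (bif decide (z = a ∨ z = 1 ∨ z = b)
      then ENNReal.ofReal p else ENNReal.ofReal (1 - p))
      = ENNReal.ofReal (1 - p) ^ (b - a - 2).toNat := by
    rw [Finset.prod_congr rfl (fun z hz => ?_), Finset.prod_const]
    · congr 1
      rw [Finset.card_sdiff_of_subset hsub, Int.card_Icc, hcard3]
      omega
    · have hz' := Finset.mem_sdiff.mp hz
      have h1 : ¬ (z = a ∨ z = 1 ∨ z = b) := by
        intro h
        exact hz'.2 (by simp only [Finset.mem_insert, Finset.mem_singleton]; tauto)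
      simp [h1]
  rw [h1]
  have h2 : ∏ z ∈ ({a, 1, b} : Finset ℤ), (bif decide (z = a ∨ z = 1 ∨ z = b)
      then ENNReal.ofReal p else ENNReal.ofReal (1 - p)) = ENNReal.ofReal p ^ 3 := by
    rw [Finset.prod_insert (by simp; omega), Finset.prod_insert (by simp; omega),
      Finset.prod_singleton]
    simp; ring
  rw [h2]
  ring

lemma one_sub_ofReal_sub {p : ℝ} (hp0 : 0 < p) (hp1 : p ≤ 1) :
    (1 : ℝ≥0∞) - ENNReal.ofReal (1 - p) = ENNReal.ofReal p := by
  rw [← ENNReal.ofReal_one, ← ENNReal.ofReal_sub 1 (by linarith)]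
  norm_num

lemma tsum_QQ {p : ℝ} (hp0 : 0 < p) (hp1 : p ≤ 1) :
    ∑' mn : ℕ × ℕ, (ENNReal.ofReal (1 - p)) ^ (mn.1 + mn.2)
      = (ENNReal.ofReal p)⁻¹ * (ENNReal.ofReal p)⁻¹ := by
  rw [ENNReal.tsum_prod']
  have h1 : ∀ m : ℕ, ∑' n : ℕ, (ENNReal.ofReal (1 - p)) ^ (m + n)
      = (ENNReal.ofReal (1 - p)) ^ m * (ENNReal.ofReal p)⁻¹ := by
    intro m
    simp_rw [pow_add]
    rw [ENNReal.tsum_mul_left, ENNReal.tsum_geometric, one_sub_ofReal_sub hp0 hp1]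
  calc ∑' m : ℕ, ∑' n : ℕ, (ENNReal.ofReal (1 - p)) ^ (m + n)
      = ∑' m : ℕ, (ENNReal.ofReal (1 - p)) ^ m * (ENNReal.ofReal p)⁻¹ := by
        exact tsum_congr h1
    _ = (∑' m : ℕ, (ENNReal.ofReal (1 - p)) ^ m) * (ENNReal.ofReal p)⁻¹ :=
        ENNReal.tsum_mul_right
    _ = (ENNReal.ofReal p)⁻¹ * (ENNReal.ofReal p)⁻¹ := by
        rw [ENNReal.tsum_geometric, one_sub_ofReal_sub hp0 hp1]

lemma ofReal_mul_inv_cancel {p : ℝ} (hp0 : 0 < p) :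
    ENNReal.ofReal p * (ENNReal.ofReal p)⁻¹ = 1 :=
  ENNReal.mul_inv_cancel (by simp [ENNReal.ofReal_eq_zero]; linarith) ENNReal.ofReal_ne_top

lemma measure_edgeOpen_line {p lam : ℝ} (hp0 : 0 < p) (hp1 : p ≤ 1)
    (hl0 : 0 < lam) (hl1 : lam ≤ 1) (i0 : Fin d) (t : ℤ) :
    alignMeasure d p lam {ξ : Cfg d | EdgeOpen ξ (line d i0 t, i0)} = ENNReal.ofReal lam := by
  haveI := isProbabilityMeasure_iidBool (ι := Site d) hp0 hp1
  haveI := isProbabilityMeasure_iidBool (ι := Site d × Site d) hl0 hl1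
  set F : ℕ × ℕ → Set (Cfg d) := fun mn =>
    (siteCyl d i0 (Finset.Icc (t - mn.1) (t + 1 + mn.2))
      (fun z => decide (z = t - mn.1 ∨ z = t + 1 + mn.2)))
      ×ˢ {η : PairLabels d | η (line d i0 (t - mn.1), line d i0 (t + 1 + mn.2)) = true}
    with hF_def
  have hab : ∀ mn : ℕ × ℕ, (t - (mn.1:ℤ)) < t + 1 + mn.2 := by intro mn; omega
  have hset : {ξ : Cfg d | EdgeOpen ξ (line d i0 t, i0)} = ⋃ mn, F mn := by
    ext ξ
    simp only [mem_setOf_eq, mem_iUnion, edgeOpen_iff i0 ξ t, hF_def, Set.mem_prod]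
    constructor
    · rintro ⟨a, b, hat, htb, ha, hb, hgap, hlab⟩
      refine ⟨((t - a).toNat, (b - (t + 1)).toNat), ?_, ?_⟩
      · have hae : t - ((t - a).toNat : ℤ) = a := by omega
        have hbe : t + 1 + ((b - (t + 1)).toNat : ℤ) = b := by omega
        rw [hae, hbe]
        exact (mem_Wset_iff i0 (by omega) ξ.1).mpr ⟨ha, hb, hgap⟩
      · have hae : t - ((t - a).toNat : ℤ) = a := by omega
        have hbe : t + 1 + ((b - (t + 1)).toNat : ℤ) = b := by omega
        rw [hae, hbe]
        exact hlab
    · rintro ⟨mn, hW, hL⟩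
      obtain ⟨ha, hb, hgap⟩ := (mem_Wset_iff i0 (hab mn) ξ.1).mp hW
      exact ⟨t - mn.1, t + 1 + mn.2, by omega, by omega, ha, hb, hgap, hL⟩
  have hdisj : Pairwise (Function.onFun Disjoint F) := by
    intro mn mn' hne
    simp only [Function.onFun, hF_def]
    rw [Set.disjoint_left]
    rintro ⟨ω, η⟩ ⟨hW, -⟩ ⟨hW', -⟩
    obtain ⟨ha, hb, hgap⟩ := (mem_Wset_iff i0 (hab mn) ω).mp hW
    obtain ⟨ha', hb', hgap'⟩ := (mem_Wset_iff i0 (hab mn') ω).mp hW'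
    obtain ⟨h1, h2⟩ := straddle_unique i0 ω (t := t) (by omega) (by omega) (by omega) (by omega)
      ha hb ha' hb' hgap hgap'
    exact hne (Prod.ext (by omega) (by omega))
  have hmeas : ∀ mn : ℕ × ℕ, MeasurableSet (F mn) := fun mn =>
    (measurableSet_siteCyl i0 _ _).prod (measurableSet_label_one _)
  rw [hset, measure_iUnion hdisj hmeas]
  have hval : ∀ mn : ℕ × ℕ, alignMeasure d p lam (F mn)
      = (ENNReal.ofReal p ^ 2 * ENNReal.ofReal lam)
          * ENNReal.ofReal (1 - p) ^ (mn.1 + mn.2) := by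
    intro mn
    rw [hF_def]
    simp only
    rw [alignMeasure, Measure.prod_prod, iid_Wset hp0 hp1 i0 (hab mn),
      iid_label_one hl0 hl1]
    have : (t + 1 + (mn.2:ℤ) - (t - mn.1) - 1).toNat = mn.1 + mn.2 := by omega
    rw [this]
    ring
  rw [tsum_congr hval, ENNReal.tsum_mul_left, tsum_QQ hp0 hp1]
  have hP := ofReal_mul_inv_cancel hp0
  calc ENNReal.ofReal p ^ 2 * ENNReal.ofReal lam
        * ((ENNReal.ofReal p)⁻¹ * (ENNReal.ofReal p)⁻¹)
      = ENNReal.ofReal lam * ((ENNReal.ofReal p * (ENNReal.ofReal p)⁻¹)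
          * (ENNReal.ofReal p * (ENNReal.ofReal p)⁻¹)) := by ring
    _ = ENNReal.ofReal lam := by rw [hP]; simp

lemma measure_E12 {p lam : ℝ} (hp0 : 0 < p) (hp1 : p ≤ 1)
    (hl0 : 0 < lam) (hl1 : lam ≤ 1) (i0 : Fin d) :
    alignMeasure d p lam
        ({ξ : Cfg d | EdgeOpen ξ (line d i0 0, i0)} ∩ {ξ : Cfg d | EdgeOpen ξ (line d i0 1, i0)})
      = ENNReal.ofReal p * ENNReal.ofReal lam ^ 2
        + ENNReal.ofReal (1 - p) * ENNReal.ofReal lam := by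
  haveI := isProbabilityMeasure_iidBool (ι := Site d) hp0 hp1
  haveI := isProbabilityMeasure_iidBool (ι := Site d × Site d) hl0 hl1
  set F2 : ℕ × ℕ → Set (Cfg d) := fun mn =>
    (siteCyl d i0 (Finset.Icc (-(mn.1:ℤ)) (2 + mn.2))
      (fun z => decide (z = -(mn.1:ℤ) ∨ z = 1 ∨ z = 2 + mn.2)))
      ×ˢ {η : PairLabels d | η (line d i0 (-(mn.1:ℤ)), line d i0 1) = true
            ∧ η (line d i0 1, line d i0 (2 + mn.2)) = true} with hF2_def
  set F3 : ℕ × ℕ → Set (Cfg d) := fun mn =>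
    (siteCyl d i0 (Finset.Icc (-(mn.1:ℤ)) (2 + mn.2))
      (fun z => decide (z = -(mn.1:ℤ) ∨ z = 2 + mn.2)))
      ×ˢ {η : PairLabels d | η (line d i0 (-(mn.1:ℤ)), line d i0 (2 + mn.2)) = true} with hF3_def
  have hA : ∀ mn : ℕ × ℕ, (-(mn.1:ℤ)) ≤ 0 := by intro mn; omega
  have hB : ∀ mn : ℕ × ℕ, (2:ℤ) ≤ 2 + mn.2 := by intro mn; omega
  have hab : ∀ mn : ℕ × ℕ, (-(mn.1:ℤ)) < 2 + mn.2 := by intro mn; omega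
  -- membership facts
  have hmemF2 : ∀ (ξ : Cfg d) (mn : ℕ × ℕ), ξ ∈ F2 mn ↔
      (ξ.1 (line d i0 (-(mn.1:ℤ))) = true ∧ ξ.1 (line d i0 1) = true
        ∧ ξ.1 (line d i0 (2 + mn.2)) = true
        ∧ ∀ c, -(mn.1:ℤ) < c → c < 2 + mn.2 → c ≠ 1 → ξ.1 (line d i0 c) = false)
      ∧ (ξ.2 (line d i0 (-(mn.1:ℤ)), line d i0 1) = true
          ∧ ξ.2 (line d i0 1, line d i0 (2 + mn.2)) = true) := by
    intro ξ mn
    rw [hF2_def]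
    simp only [Set.mem_prod, mem_setOf_eq]
    rw [mem_W2set_iff i0 (hA mn) (hB mn)]
  have hmemF3 : ∀ (ξ : Cfg d) (mn : ℕ × ℕ), ξ ∈ F3 mn ↔
      (ξ.1 (line d i0 (-(mn.1:ℤ))) = true ∧ ξ.1 (line d i0 (2 + mn.2)) = true
        ∧ ∀ c, -(mn.1:ℤ) < c → c < 2 + mn.2 → ξ.1 (line d i0 c) = false)
      ∧ ξ.2 (line d i0 (-(mn.1:ℤ)), line d i0 (2 + mn.2)) = true := by
    intro ξ mn
    rw [hF3_def]
    simp only [Set.mem_prod, mem_setOf_eq]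
    rw [mem_Wset_iff i0 (hab mn)]
  have hset : {ξ : Cfg d | EdgeOpen ξ (line d i0 0, i0)}
        ∩ {ξ : Cfg d | EdgeOpen ξ (line d i0 1, i0)}
      = (⋃ mn, F2 mn) ∪ (⋃ mn, F3 mn) := by
    ext ξ
    simp only [mem_inter_iff, mem_setOf_eq, mem_union, mem_iUnion,
      edgeOpen_iff i0 ξ 0, edgeOpen_iff i0 ξ 1]
    constructor
    · rintro ⟨⟨a0, b0, ha0, hb0, hoa0, hob0, hg0, hL0⟩, ⟨a1, b1, ha1, hb1, hoa1, hob1, hg1, hL1⟩⟩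
      by_cases hω : ξ.1 (line d i0 1) = true
      · -- site 1 occupied
        have hb0' : b0 = 1 := by
          by_contra h
          have := hg0 1 (by omega) (by omega)
          rw [hω] at this
          exact absurd this (by simp)
        have ha1' : a1 = 1 := by
          by_contra h
          have := hg1 1 (by omega) (by omega)
          rw [hω] at this
          exact absurd this (by simp)
        subst hb0'; subst ha1'
        refine Or.inl ?_
        refine ⟨((-a0).toNat, (b1 - 2).toNat), ?_⟩
        rw [hmemF2]
        have hae : -(((-a0).toNat : ℕ) : ℤ) = a0 := by omega
        have hbe : (2:ℤ) + ((b1 - 2).toNat : ℤ) = b1 := by omega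
        rw [hae, hbe]
        refine ⟨⟨hoa0, hω, hob1, fun c hc1 hc2 hc3 => ?_⟩, hL0, hL1⟩
        rcases lt_trichotomy c 1 with h | h | h
        · exact hg0 c hc1 h
        · exact absurd h hc3
        · exact hg1 c h hc2
      · -- site 1 empty
        have hω' : ξ.1 (line d i0 1) = false := by
          cases h : ξ.1 (line d i0 1)
          · rfl
          · exact absurd h hω
        have hb0' : (2:ℤ) ≤ b0 := by
          rcases eq_or_ne b0 1 with h | h
          · rw [h, hω'] at hob0; exact absurd hob0 (by simp)
          · omega
        have ha1' : a1 ≤ 0 := by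
          rcases eq_or_ne a1 1 with h | h
          · rw [h, hω'] at hoa1; exact absurd hoa1 (by simp)
          · omega
        obtain ⟨he1, he2⟩ := straddle_unique i0 ξ.1 (t := 1) (by omega) (by omega)
          (by omega) (by omega) hoa0 hob0 hoa1 hob1 hg0 hg1
        refine Or.inr ⟨((-a0).toNat, (b0 - 2).toNat), ?_⟩
        rw [hmemF3]
        have hae : -(((-a0).toNat : ℕ) : ℤ) = a0 := by omega
        have hbe : (2:ℤ) + ((b0 - 2).toNat : ℤ) = b0 := by omega
        rw [hae, hbe]
        exact ⟨⟨hoa0, hob0, hg0⟩, hL0⟩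
    · rintro (⟨mn, hmem⟩ | ⟨mn, hmem⟩)
      · rw [hmemF2] at hmem
        obtain ⟨⟨hoa, ho1, hob, hgap⟩, hLa, hLb⟩ := hmem
        exact ⟨⟨-(mn.1:ℤ), 1, by omega, by omega, hoa, ho1,
            fun c hc1 hc2 => hgap c hc1 (by omega) (by omega), hLa⟩,
          ⟨1, 2 + mn.2, by omega, by omega, ho1, hob,
            fun c hc1 hc2 => hgap c (by omega) hc2 (by omega), hLb⟩⟩
      · rw [hmemF3] at hmem
        obtain ⟨⟨hoa, hob, hgap⟩, hL⟩ := hmem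
        exact ⟨⟨-(mn.1:ℤ), 2 + mn.2, by omega, by omega, hoa, hob, hgap, hL⟩,
          ⟨-(mn.1:ℤ), 2 + mn.2, by omega, by omega, hoa, hob, hgap, hL⟩⟩
  -- disjointness
  have hdisj2 : Pairwise (Function.onFun Disjoint F2) := by
    intro mn mn' hne
    rw [Function.onFun, Set.disjoint_left]
    intro ξ h h'
    rw [hmemF2] at h h'
    obtain ⟨⟨hoa, ho1, hob, hgap⟩, -⟩ := h
    obtain ⟨⟨hoa', -, hob', hgap'⟩, -⟩ := h'
    have e1 : -(mn.1:ℤ) = -(mn'.1:ℤ) ∧ (1:ℤ) = 1 :=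
      straddle_unique i0 ξ.1 (t := 0) (by omega) (by omega) (by omega) (by omega)
        hoa ho1 hoa' ho1 (fun c hc1 hc2 => hgap c hc1 (by omega) (by omega))
        (fun c hc1 hc2 => hgap' c hc1 (by omega) (by omega))
    have e2 : (1:ℤ) = 1 ∧ (2:ℤ) + mn.2 = 2 + (mn'.2:ℤ) :=
      straddle_unique i0 ξ.1 (t := 1) (by omega) (by omega) (by omega) (by omega)
        ho1 hob ho1 hob' (fun c hc1 hc2 => hgap c (by omega) hc2 (by omega))
        (fun c hc1 hc2 => hgap' c (by omega) hc2 (by omega))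
    have := e1.1
    have := e2.2
    exact hne (Prod.ext (by omega) (by omega))
  have hdisj3 : Pairwise (Function.onFun Disjoint F3) := by
    intro mn mn' hne
    rw [Function.onFun, Set.disjoint_left]
    intro ξ h h'
    rw [hmemF3] at h h'
    obtain ⟨⟨hoa, hob, hgap⟩, -⟩ := h
    obtain ⟨⟨hoa', hob', hgap'⟩, -⟩ := h'
    obtain ⟨e1, e2⟩ := straddle_unique i0 ξ.1 (t := 0) (by omega) (by omega) (by omega)
      (by omega) hoa hob hoa' hob' hgap hgap'
    exact hne (Prod.ext (by omega) (by omega))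
  have hd23 : Disjoint (⋃ mn, F2 mn) (⋃ mn, F3 mn) := by
    rw [Set.disjoint_left]
    intro ξ h h'
    obtain ⟨mn, hmem⟩ := mem_iUnion.mp h
    obtain ⟨mn', hmem'⟩ := mem_iUnion.mp h'
    rw [hmemF2] at hmem
    rw [hmemF3] at hmem'
    have h1 : ξ.1 (line d i0 1) = true := hmem.1.2.1
    have h2 : ξ.1 (line d i0 1) = false := hmem'.1.2.2 1 (by omega) (by omega)
    rw [h1] at h2
    exact absurd h2 (by simp)
  have hmeas2 : ∀ mn : ℕ × ℕ, MeasurableSet (F2 mn) := fun mn =>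
    (measurableSet_siteCyl i0 _ _).prod (measurableSet_label_two _ _)
  have hmeas3 : ∀ mn : ℕ × ℕ, MeasurableSet (F3 mn) := fun mn =>
    (measurableSet_siteCyl i0 _ _).prod (measurableSet_label_one _)
  rw [hset, measure_union hd23 (MeasurableSet.iUnion hmeas3),
    measure_iUnion hdisj2 hmeas2, measure_iUnion hdisj3 hmeas3]
  have hP := ofReal_mul_inv_cancel hp0
  have hval2 : ∀ mn : ℕ × ℕ, alignMeasure d p lam (F2 mn)
      = (ENNReal.ofReal p ^ 3 * (ENNReal.ofReal lam * ENNReal.ofReal lam))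
          * ENNReal.ofReal (1 - p) ^ (mn.1 + mn.2) := by
    intro mn
    rw [hF2_def]
    simp only
    have hxy : (line d i0 (-(mn.1:ℤ)), line d i0 1) ≠ (line d i0 1, line d i0 (2 + mn.2)) := by
      intro h
      have := congrArg Prod.fst h
      simp only at this
      have := line_inj i0 this
      omega
    rw [alignMeasure, Measure.prod_prod, iid_W2set hp0 hp1 i0 (hA mn) (hB mn),
      iid_label_two hl0 hl1 _ _ hxy]
    have : ((2:ℤ) + mn.2 - (-(mn.1:ℤ)) - 2).toNat = mn.1 + mn.2 := by omega
    rw [this]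
    ring
  have hval3 : ∀ mn : ℕ × ℕ, alignMeasure d p lam (F3 mn)
      = (ENNReal.ofReal p ^ 2 * ENNReal.ofReal (1 - p) * ENNReal.ofReal lam)
          * ENNReal.ofReal (1 - p) ^ (mn.1 + mn.2) := by
    intro mn
    rw [hF3_def]
    simp only
    rw [alignMeasure, Measure.prod_prod, iid_Wset hp0 hp1 i0 (hab mn),
      iid_label_one hl0 hl1]
    have : ((2:ℤ) + mn.2 - (-(mn.1:ℤ)) - 1).toNat = (mn.1 + mn.2) + 1 := by omega
    rw [this, pow_succ]
    ring
  rw [tsum_congr hval2, tsum_congr hval3, ENNReal.tsum_mul_left, ENNReal.tsum_mul_left,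
    tsum_QQ hp0 hp1]
  congr 1
  · calc ENNReal.ofReal p ^ 3 * (ENNReal.ofReal lam * ENNReal.ofReal lam)
          * ((ENNReal.ofReal p)⁻¹ * (ENNReal.ofReal p)⁻¹)
        = (ENNReal.ofReal p * ENNReal.ofReal lam ^ 2)
            * ((ENNReal.ofReal p * (ENNReal.ofReal p)⁻¹)
              * (ENNReal.ofReal p * (ENNReal.ofReal p)⁻¹)) := by ring
      _ = ENNReal.ofReal p * ENNReal.ofReal lam ^ 2 := by rw [hP]; simp
  · calc ENNReal.ofReal p ^ 2 * ENNReal.ofReal (1 - p) * ENNReal.ofReal lam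
          * ((ENNReal.ofReal p)⁻¹ * (ENNReal.ofReal p)⁻¹)
        = (ENNReal.ofReal (1 - p) * ENNReal.ofReal lam)
            * ((ENNReal.ofReal p * (ENNReal.ofReal p)⁻¹)
              * (ENNReal.ofReal p * (ENNReal.ofReal p)⁻¹)) := by ring
      _ = ENNReal.ofReal (1 - p) * ENNReal.ofReal lam := by rw [hP]; simp

lemma measurableSet_const_prop {α : Type*} [MeasurableSpace α] (P : Prop) :
    MeasurableSet {_a : α | P} := by
  by_cases h : P
  · have : {_a : α | P} = univ := by ext a; simp [h]
    rw [this]; exact MeasurableSet.univ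
  · have : {_a : α | P} = ∅ := by ext a; simp [h]
    rw [this]; exact MeasurableSet.empty

lemma measurableSet_feasible (v w : Site d) :
    MeasurableSet {ω : SiteCfg d | FeasiblePair ω v w} := by
  have : {ω : SiteCfg d | FeasiblePair ω v w} = ⋃ i : Fin d,
      ({_ω : SiteCfg d | (∀ j, j ≠ i → v j = w j) ∧ v i < w i}
        ∩ ((fun ω : SiteCfg d => ω v) ⁻¹' {true})
        ∩ ((fun ω : SiteCfg d => ω w) ⁻¹' {true})
        ∩ ⋂ c : ℤ, {ω : SiteCfg d | v i < c → c < w i → ω (seg v i c) = false}) := by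
    ext ω
    simp only [FeasiblePair, mem_setOf_eq, mem_iUnion, mem_inter_iff, mem_preimage,
      mem_singleton_iff, mem_iInter]
    constructor
    · rintro ⟨i, h1, h2, h3, h4, h5⟩
      exact ⟨i, ⟨⟨⟨h1, h2⟩, h3⟩, h4⟩, h5⟩
    · rintro ⟨i, ⟨⟨⟨h1, h2⟩, h3⟩, h4⟩, h5⟩
      exact ⟨i, h1, h2, h3, h4, h5⟩
  rw [this]
  refine MeasurableSet.iUnion (fun i => ?_)
  refine MeasurableSet.inter (MeasurableSet.inter (MeasurableSet.inter ?_ ?_) ?_) ?_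
  · exact measurableSet_const_prop _
  · exact measurable_pi_apply v (measurableSet_singleton true)
  · exact measurable_pi_apply w (measurableSet_singleton true)
  · refine MeasurableSet.iInter (fun c => ?_)
    by_cases h : v i < c ∧ c < w i
    · have : {ω : SiteCfg d | v i < c → c < w i → ω (seg v i c) = false}
          = (fun ω : SiteCfg d => ω (seg v i c)) ⁻¹' {false} := by
        ext ω; simp [h.1, h.2]
      rw [this]
      exact measurable_pi_apply _ (measurableSet_singleton false)
    · have : {ω : SiteCfg d | v i < c → c < w i → ω (seg v i c) = false} = univ := by
        ext ω
        simp only [mem_setOf_eq, mem_univ, iff_true]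
        intro h1 h2
        exact absurd ⟨h1, h2⟩ h
      rw [this]
      exact MeasurableSet.univ

lemma measurableSet_edgeOpen (e : EdgeIdx d) :
    MeasurableSet {ξ : Cfg d | EdgeOpen ξ e} := by
  have : {ξ : Cfg d | EdgeOpen ξ e} = ⋃ vw : Site d × Site d,
      ((Prod.fst ⁻¹' {ω : SiteCfg d | FeasiblePair ω vw.1 vw.2})
        ∩ {_ξ : Cfg d | EdgeOnSeg e vw.1 vw.2}
        ∩ ((fun ξ : Cfg d => ξ.2 (vw.1, vw.2)) ⁻¹' {true})) := by
    ext ξ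
    simp only [EdgeOpen, mem_setOf_eq, mem_iUnion, mem_inter_iff, mem_preimage,
      mem_singleton_iff]
    constructor
    · rintro ⟨v, w, h1, h2, h3⟩
      exact ⟨(v, w), ⟨h1, h2⟩, h3⟩
    · rintro ⟨⟨v, w⟩, ⟨h1, h2⟩, h3⟩
      exact ⟨v, w, h1, h2, h3⟩
  rw [this]
  refine MeasurableSet.iUnion (fun vw => ?_)
  refine MeasurableSet.inter (MeasurableSet.inter ?_ ?_) ?_
  · exact measurable_fst (measurableSet_feasible vw.1 vw.2)
  · exact measurableSet_const_prop _
  · exact (measurable_pi_apply (vw.1, vw.2)).comp measurable_snd (measurableSet_singleton true)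

lemma measurable_edgeMap : Measurable (fun ξ : Cfg d => fun e : EdgeIdx d => edgeState ξ e) := by
  refine measurable_pi_lambda _ (fun e => ?_)
  refine measurable_to_countable' (fun b => ?_)
  cases b
  · have : (fun ξ : Cfg d => edgeState ξ e) ⁻¹' {false} = {ξ : Cfg d | EdgeOpen ξ e}ᶜ := by
      ext ξ
      simp [edgeState, mem_compl_iff]
    rw [this]
    exact (measurableSet_edgeOpen e).compl
  · have : (fun ξ : Cfg d => edgeState ξ e) ⁻¹' {true} = {ξ : Cfg d | EdgeOpen ξ e} := by
      ext ξ
      simp [edgeState]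
    rw [this]
    exact measurableSet_edgeOpen e

lemma edgeLaw_and {p lam : ℝ} (hp0 : 0 < p) (hp1 : p ≤ 1)
    (hl0 : 0 < lam) (hl1 : lam ≤ 1) (i0 : Fin d) :
    edgeLaw d p lam {σ : BondCfg d | σ (line d i0 0, i0) = true ∧ σ (line d i0 1, i0) = true}
      = ENNReal.ofReal (p * lam ^ 2 + (1 - p) * lam) := by
  have hAeq : {σ : BondCfg d | σ (line d i0 0, i0) = true ∧ σ (line d i0 1, i0) = true}
      = ((fun σ : BondCfg d => σ (line d i0 0, i0)) ⁻¹' {true})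
        ∩ ((fun σ : BondCfg d => σ (line d i0 1, i0)) ⁻¹' {true}) := by
    ext σ; simp
  have hA : MeasurableSet {σ : BondCfg d | σ (line d i0 0, i0) = true
      ∧ σ (line d i0 1, i0) = true} := by
    rw [hAeq]
    have h1 : Measurable (fun σ : BondCfg d => σ (line d i0 0, i0)) := measurable_pi_apply _
    have h2 : Measurable (fun σ : BondCfg d => σ (line d i0 1, i0)) := measurable_pi_apply _
    exact (h1 (measurableSet_singleton true)).inter (h2 (measurableSet_singleton true))
  rw [edgeLaw, Measure.map_apply measurable_edgeMap hA]
  have hpre : (fun ξ (e : EdgeIdx d) => edgeState ξ e) ⁻¹'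
        {σ : BondCfg d | σ (line d i0 0, i0) = true ∧ σ (line d i0 1, i0) = true}
      = {ξ : Cfg d | EdgeOpen ξ (line d i0 0, i0)} ∩ {ξ : Cfg d | EdgeOpen ξ (line d i0 1, i0)} := by
    ext ξ
    simp [edgeState]
  rw [hpre, measure_E12 hp0 hp1 hl0 hl1 i0]
  rw [ENNReal.ofReal_add (mul_nonneg hp0.le (pow_nonneg hl0.le 2))
      (mul_nonneg (by linarith) hl0.le),
    ENNReal.ofReal_mul hp0.le, ENNReal.ofReal_mul (by linarith : (0:ℝ) ≤ 1 - p),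
    ENNReal.ofReal_pow hl0.le]

lemma edgeLaw_or {p lam : ℝ} (hp0 : 0 < p) (hp1 : p ≤ 1)
    (hl0 : 0 < lam) (hl1 : lam ≤ 1) (i0 : Fin d) :
    edgeLaw d p lam {σ : BondCfg d | σ (line d i0 0, i0) = true ∨ σ (line d i0 1, i0) = true}
      = ENNReal.ofReal (lam + p * lam * (1 - lam)) := by
  have hBeq : {σ : BondCfg d | σ (line d i0 0, i0) = true ∨ σ (line d i0 1, i0) = true}
      = ((fun σ : BondCfg d => σ (line d i0 0, i0)) ⁻¹' {true})
        ∪ ((fun σ : BondCfg d => σ (line d i0 1, i0)) ⁻¹' {true}) := by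
    ext σ; simp
  have hB : MeasurableSet {σ : BondCfg d | σ (line d i0 0, i0) = true
      ∨ σ (line d i0 1, i0) = true} := by
    rw [hBeq]
    have h1 : Measurable (fun σ : BondCfg d => σ (line d i0 0, i0)) := measurable_pi_apply _
    have h2 : Measurable (fun σ : BondCfg d => σ (line d i0 1, i0)) := measurable_pi_apply _
    exact (h1 (measurableSet_singleton true)).union (h2 (measurableSet_singleton true))
  rw [edgeLaw, Measure.map_apply measurable_edgeMap hB]
  have hpre : (fun ξ (e : EdgeIdx d) => edgeState ξ e) ⁻¹'
        {σ : BondCfg d | σ (line d i0 0, i0) = true ∨ σ (line d i0 1, i0) = true}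
      = {ξ : Cfg d | EdgeOpen ξ (line d i0 0, i0)} ∪ {ξ : Cfg d | EdgeOpen ξ (line d i0 1, i0)} := by
    ext ξ
    simp [edgeState]
  rw [hpre]
  have key := measure_union_add_inter (μ := alignMeasure d p lam)
    {ξ : Cfg d | EdgeOpen ξ (line d i0 0, i0)} (measurableSet_edgeOpen (line d i0 1, i0))
  rw [measure_E12 hp0 hp1 hl0 hl1 i0, measure_edgeOpen_line hp0 hp1 hl0 hl1 i0 0,
    measure_edgeOpen_line hp0 hp1 hl0 hl1 i0 1] at key
  have hfin : ENNReal.ofReal p * ENNReal.ofReal lam ^ 2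
      + ENNReal.ofReal (1 - p) * ENNReal.ofReal lam ≠ ∞ := by
    refine ENNReal.add_ne_top.mpr ⟨?_, ?_⟩
    · exact ENNReal.mul_ne_top ENNReal.ofReal_ne_top
        (pow_ne_top ENNReal.ofReal_ne_top)
    · exact ENNReal.mul_ne_top ENNReal.ofReal_ne_top ENNReal.ofReal_ne_top
  have := ENNReal.eq_sub_of_add_eq hfin key
  rw [this]
  have h1 : ENNReal.ofReal lam + ENNReal.ofReal lam = ENNReal.ofReal (lam + lam) :=
    (ENNReal.ofReal_add hl0.le hl0.le).symm
  have h2 : ENNReal.ofReal p * ENNReal.ofReal lam ^ 2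
      + ENNReal.ofReal (1 - p) * ENNReal.ofReal lam
      = ENNReal.ofReal (p * lam ^ 2 + (1 - p) * lam) := by
    rw [ENNReal.ofReal_add (mul_nonneg hp0.le (pow_nonneg hl0.le 2))
        (mul_nonneg (by linarith) hl0.le),
      ENNReal.ofReal_mul hp0.le, ENNReal.ofReal_mul (by linarith : (0:ℝ) ≤ 1 - p),
      ENNReal.ofReal_pow hl0.le]
  rw [h1, h2, ← ENNReal.ofReal_sub _ (by nlinarith)]
  congr 1
  ring

lemma coupling_mono (ν : Measure (BondCfg d × BondCfg d)) [IsProbabilityMeasure ν]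
    (f g : BondCfg d × BondCfg d → BondCfg d) (hf : Measurable f) (hg : Measurable g)
    (hM : ν {q | ∀ e, f q e ≤ g q e} = 1)
    {A : Set (BondCfg d)} (hA : MeasurableSet A)
    (hmono : ∀ σ σ' : BondCfg d, (∀ e, σ e ≤ σ' e) → σ ∈ A → σ' ∈ A) :
    ν.map f A ≤ ν.map g A := by
  set M := {q : BondCfg d × BondCfg d | ∀ e, f q e ≤ g q e} with hM_def
  have hMmeas : MeasurableSet M := by
    have : M = ⋂ e : EdgeIdx d,
        (((fun q => f q e) ⁻¹' {false}) ∪ ((fun q => g q e) ⁻¹' {true})) := by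
      ext q
      simp only [hM_def, mem_setOf_eq, mem_iInter, mem_union, mem_preimage, mem_singleton_iff]
      refine forall_congr' (fun e => ?_)
      cases hq : f q e <;> cases hq' : g q e <;> simp [Bool.le_iff_imp]
    rw [this]
    exact MeasurableSet.iInter (fun e =>
      (((measurable_pi_apply e).comp hf (measurableSet_singleton false)).union
        ((measurable_pi_apply e).comp hg (measurableSet_singleton true))))
  have hMc : ν Mᶜ = 0 := by
    rw [measure_compl hMmeas (measure_ne_top _ _), hM, measure_univ, tsub_self]
  rw [Measure.map_apply hf hA, Measure.map_apply hg hA]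
  calc ν (f ⁻¹' A) = ν (f ⁻¹' A ∩ M) + ν (f ⁻¹' A \ M) :=
        (measure_inter_add_diff _ hMmeas).symm
    _ = ν (f ⁻¹' A ∩ M) := by
        rw [measure_mono_null (diff_subset_compl _ _) hMc, add_zero]
    _ ≤ ν (g ⁻¹' A) := by
        refine measure_mono ?_
        rintro q ⟨hq, hqM⟩
        exact hmono (f q) (g q) hqM hq

end NC
end NCaux

open NC

/-- Fix `d ≥ 2`, `λ ∈ (0,1)` and `0 < p₁ < p₂ ≤ 1`. There is no
monotone coupling of the edge laws at `p₁` and `p₂`, in either direction. -/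
theorem no_monotone_coupling (d : ℕ) (hd : 2 ≤ d) (lam : ℝ) (hlam : lam ∈ Set.Ioo (0 : ℝ) 1)
    (p1 p2 : ℝ) (hp1 : 0 < p1) (h12 : p1 < p2) (hp2 : p2 ≤ 1) :
    (¬ ∃ ν : Measure (BondCfg d × BondCfg d), IsProbabilityMeasure ν ∧
        ν.map Prod.fst = edgeLaw d p1 lam ∧ ν.map Prod.snd = edgeLaw d p2 lam ∧
        ν {q | ∀ e : EdgeIdx d, q.1 e ≤ q.2 e} = 1) ∧
    (¬ ∃ ν : Measure (BondCfg d × BondCfg d), IsProbabilityMeasure ν ∧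
        ν.map Prod.fst = edgeLaw d p1 lam ∧ ν.map Prod.snd = edgeLaw d p2 lam ∧
        ν {q | ∀ e : EdgeIdx d, q.2 e ≤ q.1 e} = 1) := by
  obtain ⟨hl0, hl1⟩ := hlam
  have hl1' : lam ≤ 1 := hl1.le
  have hp1' : p1 ≤ 1 := by linarith
  have hp20 : 0 < p2 := by linarith
  set i0 : Fin d := ⟨0, by omega⟩ with hi0
  set eA : EdgeIdx d := (line d i0 0, i0) with heA
  set eB : EdgeIdx d := (line d i0 1, i0) with heB
  constructor
  · rintro ⟨ν, hprob, hfst, hsnd, hM⟩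
    set A : Set (BondCfg d) := {σ | σ eA = true ∧ σ eB = true} with hA_def
    have hAmeas : MeasurableSet A := by
      have hAeq : A = ((fun σ : BondCfg d => σ eA) ⁻¹' {true})
          ∩ ((fun σ : BondCfg d => σ eB) ⁻¹' {true}) := by ext σ; simp [hA_def]
      rw [hAeq]
      have h1 : Measurable (fun σ : BondCfg d => σ eA) := measurable_pi_apply _
      have h2 : Measurable (fun σ : BondCfg d => σ eB) := measurable_pi_apply _
      exact (h1 (measurableSet_singleton true)).inter (h2 (measurableSet_singleton true))
    have hmono : ∀ σ σ' : BondCfg d, (∀ e, σ e ≤ σ' e) → σ ∈ A → σ' ∈ A := by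
      intro σ σ' hle hσ
      obtain ⟨h1, h2⟩ := hσ
      constructor
      · have := hle eA; rw [h1] at this; exact Bool.le_iff_imp.mp this rfl
      · have := hle eB; rw [h2] at this; exact Bool.le_iff_imp.mp this rfl
    have hle := coupling_mono ν Prod.fst Prod.snd measurable_fst measurable_snd hM hAmeas hmono
    rw [hfst, hsnd, hA_def, heA, heB] at hle
    have hv1 := edgeLaw_and (d := d) hp1 hp1' hl0 hl1' i0
    have hv2 := edgeLaw_and (d := d) hp20 hp2 hl0 hl1' i0
    rw [hv1, hv2] at hle
    have hlt : p2 * lam ^ 2 + (1 - p2) * lam < p1 * lam ^ 2 + (1 - p1) * lam := by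
      nlinarith [mul_pos (sub_pos.mpr h12) (mul_pos hl0 (sub_pos.mpr hl1))]
    have := (ENNReal.ofReal_lt_ofReal_iff (by nlinarith)).mpr hlt
    exact absurd hle (not_le.mpr this)
  · rintro ⟨ν, hprob, hfst, hsnd, hM⟩
    set B : Set (BondCfg d) := {σ | σ eA = true ∨ σ eB = true} with hB_def
    have hBmeas : MeasurableSet B := by
      have hBeq : B = ((fun σ : BondCfg d => σ eA) ⁻¹' {true})
          ∪ ((fun σ : BondCfg d => σ eB) ⁻¹' {true}) := by ext σ; simp [hB_def]
      rw [hBeq]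
      have h1 : Measurable (fun σ : BondCfg d => σ eA) := measurable_pi_apply _
      have h2 : Measurable (fun σ : BondCfg d => σ eB) := measurable_pi_apply _
      exact (h1 (measurableSet_singleton true)).union (h2 (measurableSet_singleton true))
    have hmono : ∀ σ σ' : BondCfg d, (∀ e, σ e ≤ σ' e) → σ ∈ B → σ' ∈ B := by
      intro σ σ' hle hσ
      rcases hσ with h1 | h1
      · left; have := hle eA; rw [h1] at this; exact Bool.le_iff_imp.mp this rfl
      · right; have := hle eB; rw [h1] at this; exact Bool.le_iff_imp.mp this rfl
    have hle := coupling_mono ν Prod.snd Prod.fst measurable_snd measurable_fst hM hBmeas hmono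
    rw [hfst, hsnd, hB_def, heA, heB] at hle
    have hv1 := edgeLaw_or (d := d) hp1 hp1' hl0 hl1' i0
    have hv2 := edgeLaw_or (d := d) hp20 hp2 hl0 hl1' i0
    rw [hv1, hv2] at hle
    have hlt : lam + p1 * lam * (1 - lam) < lam + p2 * lam * (1 - lam) := by
      nlinarith [mul_pos (sub_pos.mpr h12) (mul_pos hl0 (sub_pos.mpr hl1))]
    have := (ENNReal.ofReal_lt_ofReal_iff (by nlinarith)).mpr hlt
    exact absurd hle (not_le.mpr this)


end AlignmentPercolation
end
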